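/- arXiv:2001.01436 — 8 statements merged into one kernel-verified Lean document; each statement's English description precedes it below -/
import Mathlib

section
/- For all vectors ξ, ζ in ℂⁿ and p ∈ (1, ∞), there exist constants c, C > 0 depending only on p and n such that c (|ξ| + |ζ|)^{p-2} |ξ − ζ|² ≤ Re[(|ξ|^{p-2} ξ − |ζ|^{p-2} ζ) · (conj(ξ) − conj(ζ))] ≤ C (|ξ| + |ζ|)^{p-2} |ξ − ζ|². -/
open scoped BigOperators
open Real


lemma myRpowMulSelf {x : ℝ} (hx : 0 ≤ x) {q : ℝ} (hq : 0 < q) : x ^ (q - 1) * x = x ^ q := by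
  rcases eq_or_lt_of_le hx with rfl | hx'
  · rw [Real.zero_rpow hq.ne', mul_zero]
  · rw [← Real.rpow_add_one hx'.ne', sub_add_cancel]

lemma bernGe {q s t : ℝ} (hq : 1 ≤ q) (ht : 0 ≤ t) (hts : t ≤ s) :
    s ^ q - t ^ q ≤ q * s ^ (q - 1) * (s - t) := by
  rcases eq_or_lt_of_le (ht.trans hts) with rfl | hs
  · have h0 : t = 0 := le_antisymm hts ht
    subst h0
    simp
  · have h1 : -1 ≤ t / s - 1 := by
      have : 0 ≤ t / s := div_nonneg ht hs.le
      linarith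
    have hb := one_add_mul_self_le_rpow_one_add h1 hq
    have h2 : 1 + (t / s - 1) = t / s := by ring
    rw [h2, Real.div_rpow ht hs.le] at hb
    have hsq : 0 < s ^ q := Real.rpow_pos_of_pos hs q
    have hb2 : (1 + q * (t / s - 1)) * s ^ q ≤ t ^ q := (le_div_iff₀ hsq).mp hb
    have hs1 : s ^ (q - 1) * s = s ^ q := myRpowMulSelf (le_of_lt hs) (by linarith)
    have hts' : s ^ (q-1) * t = (t / s) * s ^ q := by
      field_simp
      nlinarith [hs1]
    nlinarith [hb2, hs1, hts']

lemma bernLe {q s t : ℝ} (hq0 : 0 < q) (hq : q ≤ 1) (ht : 0 ≤ t) (hts : t ≤ s) :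
    q * s ^ (q - 1) * (s - t) ≤ s ^ q - t ^ q := by
  rcases eq_or_lt_of_le (ht.trans hts) with rfl | hs
  · have h0 : t = 0 := le_antisymm hts ht
    subst h0; simp
  · have h1 : -1 ≤ t / s - 1 := by
      have : 0 ≤ t / s := div_nonneg ht hs.le
      linarith
    have hb := rpow_one_add_le_one_add_mul_self h1 hq0.le hq
    have h2 : 1 + (t / s - 1) = t / s := by ring
    rw [h2, Real.div_rpow ht hs.le] at hb
    have hsq : 0 < s ^ q := Real.rpow_pos_of_pos hs q
    have hb2 : t ^ q ≤ (1 + q * (t / s - 1)) * s ^ q := (div_le_iff₀ hsq).mp hb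
    have hs1 : s ^ (q - 1) * s = s ^ q := myRpowMulSelf (le_of_lt hs) (by linarith)
    have hts' : s ^ (q-1) * t = (t / s) * s ^ q := by
      field_simp
      nlinarith [hs1]
    nlinarith [hb2, hs1, hts']

lemma monoLower {q s t : ℝ} (hq : 1 ≤ q) (ht : 0 ≤ t) (hts : t ≤ s) :
    s ^ (q - 1) * (s - t) ≤ s ^ q - t ^ q := by
  have hs : 0 ≤ s := ht.trans hts
  have h1 : s ^ (q - 1) * s = s ^ q := myRpowMulSelf hs (by linarith)
  have h2 : t ^ (q - 1) * t = t ^ q := myRpowMulSelf ht (by linarith)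
  have h3 : t ^ (q - 1) ≤ s ^ (q - 1) := Real.rpow_le_rpow ht hts (by linarith)
  nlinarith [mul_le_mul_of_nonneg_right h3 ht]

lemma smallUpper {q s t : ℝ} (hq0 : 0 < q) (hq : q ≤ 1) (ht : 0 ≤ t) (hts : t ≤ s) :
    s ^ q - t ^ q ≤ s ^ (q - 1) * (s - t) := by
  have hs : 0 ≤ s := ht.trans hts
  have h1 : s ^ (q - 1) * s = s ^ q := myRpowMulSelf hs hq0
  rcases eq_or_lt_of_le ht with rfl | ht'
  · rw [Real.zero_rpow hq0.ne']
    nlinarith [h1]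
  · have h2 : t ^ (q - 1) * t = t ^ q := myRpowMulSelf ht hq0
    have h3 : s ^ (q - 1) ≤ t ^ (q - 1) := Real.rpow_le_rpow_of_nonpos ht' hts (by linarith)
    nlinarith [mul_le_mul_of_nonneg_right h3 ht]


noncomputable def c0 (q : ℝ) : ℝ := min (min q ((2:ℝ) ^ (1 - q))) ((2:ℝ) ^ (-q))
noncomputable def C0 (q : ℝ) : ℝ := q + (2:ℝ) ^ (1 - q) + 2

lemma c0_pos {q : ℝ} (hq : 0 < q) : 0 < c0 q := by
  have h1 : (0:ℝ) < (2:ℝ) ^ (1 - q) := Real.rpow_pos_of_pos two_pos _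
  have h2 : (0:ℝ) < (2:ℝ) ^ (-q) := Real.rpow_pos_of_pos two_pos _
  simp only [c0, lt_min_iff]
  exact ⟨⟨hq, h1⟩, h2⟩

lemma C0_pos {q : ℝ} (hq : 0 < q) : 0 < C0 q := by
  have h1 : (0:ℝ) < (2:ℝ) ^ (1 - q) := Real.rpow_pos_of_pos two_pos _
  simp only [C0]; linarith

lemma c0_le_q {q : ℝ} : c0 q ≤ q := (min_le_left _ _).trans (min_le_left _ _)
lemma c0_le_pow1 {q : ℝ} : c0 q ≤ (2:ℝ) ^ (1 - q) := (min_le_left _ _).trans (min_le_right _ _)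
lemma c0_le_pow2 {q : ℝ} : c0 q ≤ (2:ℝ) ^ (-q) := min_le_right _ _
lemma q_le_C0 {q : ℝ} : q ≤ C0 q := by
  have h1 : (0:ℝ) < (2:ℝ) ^ (1 - q) := Real.rpow_pos_of_pos two_pos _
  simp only [C0]; linarith
lemma pow1_le_C0 {q : ℝ} (hq : 0 < q) : (2:ℝ) ^ (1 - q) ≤ C0 q := by
  simp only [C0]; linarith
lemma two_le_C0 {q : ℝ} (hq : 0 < q) : (2:ℝ) ≤ C0 q := by
  have h1 : (0:ℝ) < (2:ℝ) ^ (1 - q) := Real.rpow_pos_of_pos two_pos _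
  simp only [C0]; linarith

lemma half_rpow {x r : ℝ} (hx : 0 ≤ x) : (x / 2) ^ r = x ^ r * (2:ℝ) ^ (-r) := by
  rw [Real.div_rpow hx (by norm_num : (0:ℝ) ≤ 2), Real.rpow_neg (by norm_num : (0:ℝ) ≤ 2),
    div_eq_mul_inv]




lemma endpointA {q : ℝ} (hq : 0 < q) {s t : ℝ} (ht : 0 ≤ t) (hts : t ≤ s) :
    c0 q * ((s + t) ^ (q - 1) * (s - t) ^ 2) ≤ (s ^ q - t ^ q) * (s - t) ∧
    (s ^ q - t ^ q) * (s - t) ≤ C0 q * ((s + t) ^ (q - 1) * (s - t) ^ 2) := by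
  rcases eq_or_lt_of_le (ht.trans hts) with hs0 | hs
  · have h1 : s = 0 := hs0.symm
    have h0 : t = 0 := le_antisymm (h1 ▸ hts) ht
    subst h0; subst h1
    norm_num
  · have hstpos : (0:ℝ) < s + t := by linarith
    have hK : (0:ℝ) ≤ (s + t) ^ (q - 1) := Real.rpow_nonneg hstpos.le _
    have hd : (0:ℝ) ≤ s - t := by linarith
    have hXnn : (0:ℝ) ≤ (s + t) ^ (q - 1) * (s - t) ^ 2 := mul_nonneg hK (sq_nonneg _)
    have hhalf : ((s + t) / 2) ^ (q - 1) = (s + t) ^ (q - 1) * (2:ℝ) ^ (1 - q) := by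
      rw [half_rpow hstpos.le, show -(q - 1) = 1 - q by ring]
    rcases le_total q 1 with hq1 | hq1
    · have e1 : (s + t) ^ (q - 1) ≤ s ^ (q - 1) :=
        Real.rpow_le_rpow_of_nonpos hs (by linarith) (by linarith)
      have e2 : s ^ (q - 1) ≤ ((s + t) / 2) ^ (q - 1) :=
        Real.rpow_le_rpow_of_nonpos (by linarith) (by linarith) (by linarith)
      have lower := bernLe hq hq1 ht hts
      have upper := smallUpper hq hq1 ht hts
      constructor
      · have step : q * (s + t) ^ (q - 1) * (s - t) ≤ s ^ q - t ^ q :=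
          (mul_le_mul_of_nonneg_right (mul_le_mul_of_nonneg_left e1 hq.le) hd).trans lower
        have step2 := mul_le_mul_of_nonneg_right step hd
        have step3 := mul_le_mul_of_nonneg_right (c0_le_q (q := q)) hXnn
        nlinarith [step2, step3]
      · have step : s ^ q - t ^ q ≤ (s + t) ^ (q - 1) * (2:ℝ) ^ (1 - q) * (s - t) := by
          calc s ^ q - t ^ q ≤ s ^ (q - 1) * (s - t) := upper
            _ ≤ ((s + t) / 2) ^ (q - 1) * (s - t) := mul_le_mul_of_nonneg_right e2 hd
            _ = (s + t) ^ (q - 1) * (2:ℝ) ^ (1 - q) * (s - t) := by rw [hhalf]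
        have step2 := mul_le_mul_of_nonneg_right step hd
        have step3 := mul_le_mul_of_nonneg_right (pow1_le_C0 hq) hXnn
        nlinarith [step2, step3]
    · have e1 : s ^ (q - 1) ≤ (s + t) ^ (q - 1) :=
        Real.rpow_le_rpow hs.le (by linarith) (by linarith)
      have e2 : ((s + t) / 2) ^ (q - 1) ≤ s ^ (q - 1) :=
        Real.rpow_le_rpow (by linarith) (by linarith) (by linarith)
      have lower := monoLower hq1 ht hts
      have upper := bernGe hq1 ht hts
      constructor
      · have step : (s + t) ^ (q - 1) * (2:ℝ) ^ (1 - q) * (s - t) ≤ s ^ q - t ^ q := by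
          calc (s + t) ^ (q - 1) * (2:ℝ) ^ (1 - q) * (s - t)
              = ((s + t) / 2) ^ (q - 1) * (s - t) := by rw [hhalf]
            _ ≤ s ^ (q - 1) * (s - t) := mul_le_mul_of_nonneg_right e2 hd
            _ ≤ s ^ q - t ^ q := lower
        have step2 := mul_le_mul_of_nonneg_right step hd
        have step3 := mul_le_mul_of_nonneg_right (c0_le_pow1 (q := q)) hXnn
        nlinarith [step2, step3]
      · have step : s ^ q - t ^ q ≤ q * (s + t) ^ (q - 1) * (s - t) :=
          upper.trans (mul_le_mul_of_nonneg_right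
            (mul_le_mul_of_nonneg_left e1 hq.le) hd)
        have step2 := mul_le_mul_of_nonneg_right step hd
        have step3 := mul_le_mul_of_nonneg_right (q_le_C0 (q := q)) hXnn
        nlinarith [step2, step3]

lemma endpointB {q : ℝ} (hq : 0 < q) {s t : ℝ} (ht : 0 ≤ t) (hts : t ≤ s) :
    c0 q * ((s + t) ^ (q - 1) * (s + t) ^ 2) ≤ (s ^ q + t ^ q) * (s + t) ∧
    (s ^ q + t ^ q) * (s + t) ≤ C0 q * ((s + t) ^ (q - 1) * (s + t) ^ 2) := by
  have hs : 0 ≤ s := ht.trans hts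
  have hst : (0:ℝ) ≤ s + t := by linarith
  have hid : (s + t) ^ (q - 1) * (s + t) ^ 2 = (s + t) ^ q * (s + t) := by
    have := myRpowMulSelf hst hq
    nlinarith [this]
  have htq : (0:ℝ) ≤ t ^ q := Real.rpow_nonneg ht _
  have hsq : (0:ℝ) ≤ s ^ q := Real.rpow_nonneg hs _
  have hstq : (0:ℝ) ≤ (s + t) ^ q := Real.rpow_nonneg hst _
  constructor
  · have e1 : (s + t) ^ q * (2:ℝ) ^ (-q) ≤ s ^ q := by
      have h2 : ((s + t) / 2) ^ q ≤ s ^ q :=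
        Real.rpow_le_rpow (by linarith) (by linarith) hq.le
      rwa [half_rpow hst] at h2
    have step : c0 q * (s + t) ^ q ≤ s ^ q + t ^ q := by
      have := mul_le_mul_of_nonneg_right (c0_le_pow2 (q := q)) hstq
      nlinarith [e1]
    rw [hid]
    calc c0 q * ((s + t) ^ q * (s + t)) = c0 q * (s + t) ^ q * (s + t) := by ring
      _ ≤ (s ^ q + t ^ q) * (s + t) := mul_le_mul_of_nonneg_right step hst
  · have e1 : s ^ q ≤ (s + t) ^ q := Real.rpow_le_rpow hs (by linarith) hq.le
    have e2 : t ^ q ≤ (s + t) ^ q := Real.rpow_le_rpow ht (by linarith) hq.le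
    have step : s ^ q + t ^ q ≤ C0 q * (s + t) ^ q := by
      have := mul_le_mul_of_nonneg_right (two_le_C0 hq) hstq
      nlinarith
    rw [hid]
    calc (s ^ q + t ^ q) * (s + t) ≤ C0 q * (s + t) ^ q * (s + t) :=
        mul_le_mul_of_nonneg_right step hst
      _ = C0 q * ((s + t) ^ q * (s + t)) := by ring




lemma scalarCore {q : ℝ} (hq : 0 < q) {s t : ℝ} (ht : 0 ≤ t) (hts : t ≤ s)
    (R : ℝ) (hR : |R| ≤ s * t) :
    c0 q * ((s + t) ^ (q - 1) * (s ^ 2 + t ^ 2 - 2 * R)) ≤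
      s ^ (q - 1) * s ^ 2 + t ^ (q - 1) * t ^ 2 - (s ^ (q - 1) + t ^ (q - 1)) * R ∧
    s ^ (q - 1) * s ^ 2 + t ^ (q - 1) * t ^ 2 - (s ^ (q - 1) + t ^ (q - 1)) * R ≤
      C0 q * ((s + t) ^ (q - 1) * (s ^ 2 + t ^ 2 - 2 * R)) := by
  have hs : 0 ≤ s := ht.trans hts
  have hs1 : s ^ (q - 1) * s = s ^ q := myRpowMulSelf hs hq
  have ht1 : t ^ (q - 1) * t = t ^ q := myRpowMulSelf ht hq
  have hMst : s ^ (q - 1) * s ^ 2 + t ^ (q - 1) * t ^ 2 - (s ^ (q - 1) + t ^ (q - 1)) * (s * t)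
      = (s ^ q - t ^ q) * (s - t) := by
    linear_combination (s - t) * hs1 + (t - s) * ht1
  have hMnst : s ^ (q - 1) * s ^ 2 + t ^ (q - 1) * t ^ 2 + (s ^ (q - 1) + t ^ (q - 1)) * (s * t)
      = (s ^ q + t ^ q) * (s + t) := by
    linear_combination (s + t) * hs1 + (s + t) * ht1
  obtain ⟨A1, A2⟩ := endpointA hq ht hts
  obtain ⟨B1, B2⟩ := endpointB hq ht hts
  rw [← hMst] at A1 A2
  rw [← hMnst] at B1 B2
  obtain ⟨hRge, hRle⟩ := abs_le.mp hR
  constructor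
  · rcases le_total 0 (2 * c0 q * (s + t) ^ (q - 1) - (s ^ (q - 1) + t ^ (q - 1))) with hγ | hγ
    · nlinarith [B1, mul_nonneg hγ (by linarith : (0:ℝ) ≤ R + s * t)]
    · nlinarith [A1, mul_nonneg (neg_nonneg.mpr hγ) (by linarith : (0:ℝ) ≤ s * t - R)]
  · rcases le_total 0 ((s ^ (q - 1) + t ^ (q - 1)) - 2 * C0 q * (s + t) ^ (q - 1)) with hγ | hγ
    · nlinarith [B2, mul_nonneg hγ (by linarith : (0:ℝ) ≤ R + s * t)]
    · nlinarith [A2, mul_nonneg (neg_nonneg.mpr hγ) (by linarith : (0:ℝ) ≤ s * t - R)]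




lemma scalarMain {p : ℝ} (hp : 1 < p) {s t : ℝ} (hs : 0 ≤ s) (ht : 0 ≤ t)
    (R : ℝ) (hR : |R| ≤ s * t) :
    c0 (p - 1) * ((s + t) ^ (p - 2) * (s ^ 2 + t ^ 2 - 2 * R)) ≤
      s ^ (p - 2) * s ^ 2 + t ^ (p - 2) * t ^ 2 - (s ^ (p - 2) + t ^ (p - 2)) * R ∧
    s ^ (p - 2) * s ^ 2 + t ^ (p - 2) * t ^ 2 - (s ^ (p - 2) + t ^ (p - 2)) * R ≤
      C0 (p - 1) * ((s + t) ^ (p - 2) * (s ^ 2 + t ^ 2 - 2 * R)) := by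
  have hq : 0 < p - 1 := by linarith
  have hrw : p - 2 = (p - 1) - 1 := by ring
  rw [hrw]
  rcases le_total t s with hts | hts
  · exact scalarCore hq ht hts R hR
  · have hR' : |R| ≤ t * s := by rwa [mul_comm]
    obtain ⟨h1, h2⟩ := scalarCore hq hs hts R hR'
    rw [add_comm t s] at h1 h2
    constructor
    · nlinarith [h1]
    · nlinarith [h2]




/-- Two-sided bound for `Re[(|ξ|^{p-2}ξ − |ζ|^{p-2}ζ)·(conj ξ − conj ζ)]`. -/
theorem stmt1 (n : ℕ) (p : ℝ) (hp : 1 < p) :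
    ∃ c > (0 : ℝ), ∃ C > (0 : ℝ), ∀ ξ ζ : EuclideanSpace ℂ (Fin n),
      c * (‖ξ‖ + ‖ζ‖) ^ (p - 2) * ‖ξ - ζ‖ ^ 2 ≤
        (∑ j, (((‖ξ‖ ^ (p - 2) : ℝ) : ℂ) * ξ j - ((‖ζ‖ ^ (p - 2) : ℝ) : ℂ) * ζ j) *
          (starRingEnd ℂ) (ξ j - ζ j)).re ∧
      (∑ j, (((‖ξ‖ ^ (p - 2) : ℝ) : ℂ) * ξ j - ((‖ζ‖ ^ (p - 2) : ℝ) : ℂ) * ζ j) *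
          (starRingEnd ℂ) (ξ j - ζ j)).re ≤
        C * (‖ξ‖ + ‖ζ‖) ^ (p - 2) * ‖ξ - ζ‖ ^ 2 := by
  have hq : 0 < p - 1 := by linarith
  refine ⟨c0 (p - 1), c0_pos hq, C0 (p - 1), C0_pos hq, fun ξ ζ => ?_⟩
  set a : ℝ := ‖ξ‖ ^ (p - 2) with ha
  set b : ℝ := ‖ζ‖ ^ (p - 2) with hb
  set R : ℝ := (inner ℂ ξ ζ : ℂ).re with hRdef
  -- the sum equals an inner product
  have hsum_eq : (∑ j, ((a : ℂ) * ξ j - (b : ℂ) * ζ j) * (starRingEnd ℂ) (ξ j - ζ j))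
      = (inner ℂ (ξ - ζ) ((a : ℂ) • ξ - (b : ℂ) • ζ) : ℂ) := by
    rw [PiLp.inner_apply]
    refine Finset.sum_congr rfl fun j _ => ?_
    simp only [PiLp.sub_apply, PiLp.smul_apply, smul_eq_mul, RCLike.inner_apply]
  have hip : (inner ℂ (ξ - ζ) ((a : ℂ) • ξ - (b : ℂ) • ζ) : ℂ)
      = (a : ℂ) * inner ℂ ξ ξ - (b : ℂ) * inner ℂ ξ ζ - (a : ℂ) * inner ℂ ζ ξ
        + (b : ℂ) * inner ℂ ζ ζ := by
    rw [inner_sub_left, inner_sub_right, inner_sub_right, inner_smul_right, inner_smul_right,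
      inner_smul_right, inner_smul_right]
    ring
  have hconj : (inner ℂ ζ ξ : ℂ).re = R := by
    rw [hRdef, ← inner_conj_symm ξ ζ]
    exact (Complex.conj_re _).symm
  have hre : (∑ j, ((a : ℂ) * ξ j - (b : ℂ) * ζ j) * (starRingEnd ℂ) (ξ j - ζ j)).re
      = a * ‖ξ‖ ^ 2 + b * ‖ζ‖ ^ 2 - (a + b) * R := by
    rw [hsum_eq, hip]
    have h1 : ((inner ℂ ξ ξ : ℂ)).re = ‖ξ‖ ^ 2 := by
      rw [inner_self_eq_norm_sq_to_K (𝕜 := ℂ) ξ]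
      norm_cast
    have h2 : ((inner ℂ ζ ζ : ℂ)).re = ‖ζ‖ ^ 2 := by
      rw [inner_self_eq_norm_sq_to_K (𝕜 := ℂ) ζ]
      norm_cast
    simp only [Complex.add_re, Complex.sub_re, Complex.mul_re, Complex.ofReal_re,
      Complex.ofReal_im, zero_mul, sub_zero, h1, h2, hconj, ← hRdef]
    ring
  have hnorm : ‖ξ - ζ‖ ^ 2 = ‖ξ‖ ^ 2 + ‖ζ‖ ^ 2 - 2 * R := by
    have h := @norm_sub_sq ℂ _ _ _ _ ξ ζ
    simp only [RCLike.re_to_complex] at h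
    rw [h, ← hRdef]; ring
  have hR : |R| ≤ ‖ξ‖ * ‖ζ‖ := by
    rw [hRdef]
    refine le_trans ?_ (norm_inner_le_norm (𝕜 := ℂ) ξ ζ)
    exact Complex.abs_re_le_norm _
  obtain ⟨h1, h2⟩ := scalarMain hp (norm_nonneg ξ) (norm_nonneg ζ) R hR
  rw [hre, hnorm]
  constructor
  · calc c0 (p-1) * (‖ξ‖ + ‖ζ‖) ^ (p-2) * (‖ξ‖^2 + ‖ζ‖^2 - 2*R)
        = c0 (p-1) * ((‖ξ‖ + ‖ζ‖) ^ (p-2) * (‖ξ‖^2 + ‖ζ‖^2 - 2*R)) := by ring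
      _ ≤ _ := by rw [ha, hb]; nlinarith [h1]
  · calc a * ‖ξ‖^2 + b * ‖ζ‖^2 - (a+b)*R
        ≤ C0 (p-1) * ((‖ξ‖ + ‖ζ‖) ^ (p-2) * (‖ξ‖^2 + ‖ζ‖^2 - 2*R)) := by
          rw [ha, hb]; nlinarith [h2]
      _ = C0 (p-1) * (‖ξ‖ + ‖ζ‖) ^ (p-2) * (‖ξ‖^2 + ‖ζ‖^2 - 2*R) := by ring
end

section
/- For all ξ, ζ ∈ ℂⁿ and every θ ∈ [0,1] with |ξ| ≤ |ζ|, one has | |ξ| |ζ| − ξ · conj(ζ) | ≤ 2^{2−θ} |ξ| |ζ|^{1−θ} |ξ − ζ|^{θ}. -/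
open scoped BigOperators

/-- `| |ξ||ζ| − ξ·conj ζ | ≤ 2^{2−θ} |ξ| |ζ|^{1−θ} |ξ−ζ|^θ` when `|ξ| ≤ |ζ|`, `θ ∈ [0,1]`. -/
theorem stmt5 (n : ℕ) (θ : ℝ) (hθ0 : 0 ≤ θ) (hθ1 : θ ≤ 1)
    (ξ ζ : EuclideanSpace ℂ (Fin n)) (h : ‖ξ‖ ≤ ‖ζ‖) :
    ‖((‖ξ‖ * ‖ζ‖ : ℝ) : ℂ) - ∑ j, ξ j * (starRingEnd ℂ) (ζ j)‖ ≤
      2 ^ (2 - θ) * ‖ξ‖ * ‖ζ‖ ^ (1 - θ) * ‖ξ - ζ‖ ^ θ := by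
  set a := ‖ξ‖ with ha
  set b := ‖ζ‖ with hb
  set d := ‖ξ - ζ‖ with hd
  have ha0 : 0 ≤ a := norm_nonneg _
  have hb0 : 0 ≤ b := norm_nonneg _
  have hd0 : 0 ≤ d := norm_nonneg _
  have hT : (∑ j, ξ j * (starRingEnd ℂ) (ζ j)) = inner (𝕜 := ℂ) ζ ξ := by
    rw [PiLp.inner_apply]
    simp [RCLike.inner_apply, mul_comm]
  rw [hT]
  set S := ‖((a * b : ℝ) : ℂ) - inner (𝕜 := ℂ) ζ ξ‖ with hS
  have hS0 : 0 ≤ S := norm_nonneg _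
  have h1 : S ≤ 2 * a * b := by
    have h1a : ‖inner (𝕜 := ℂ) ζ ξ‖ ≤ b * a := by
      simpa using norm_inner_le_norm (𝕜 := ℂ) ζ ξ
    calc S ≤ ‖((a * b : ℝ) : ℂ)‖ + ‖inner (𝕜 := ℂ) ζ ξ‖ :=
            norm_sub_le _ _
      _ ≤ a * b + b * a := by
            refine add_le_add ?_ h1a
            rw [Complex.norm_real, Real.norm_eq_abs, abs_of_nonneg (mul_nonneg ha0 hb0)]
      _ = 2 * a * b := by ring
  have h2 : S ≤ 2 * a * d := by
    have key : inner (𝕜 := ℂ) ζ ξ = ((a ^ 2 : ℝ) : ℂ) - inner (𝕜 := ℂ) (ξ - ζ) ξ := by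
      have cast_eq : ∀ r : ℝ, (RCLike.ofReal r : ℂ) = Complex.ofReal r := fun r => rfl
      rw [inner_sub_left, inner_self_eq_norm_sq_to_K]
      simp only [cast_eq]
      push_cast
      rw [ha]
      ring
    have hin : ‖inner (𝕜 := ℂ) (ξ - ζ) ξ‖ ≤ d * a := by
      exact norm_inner_le_norm (𝕜 := ℂ) (ξ - ζ) ξ
    have hba : b - a ≤ d := by
      have := norm_sub_norm_le ζ ξ
      rw [← neg_sub ξ ζ, norm_neg] at this
      linarith
    calc S = ‖((a * b - a ^ 2 : ℝ) : ℂ) + inner (𝕜 := ℂ) (ξ - ζ) ξ‖ := by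
            rw [hS, key]; congr 1; push_cast; ring
      _ ≤ ‖((a * b - a ^ 2 : ℝ) : ℂ)‖ + ‖inner (𝕜 := ℂ) (ξ - ζ) ξ‖ :=
            norm_add_le _ _
      _ ≤ (a * b - a ^ 2) + d * a := by
            refine add_le_add ?_ hin
            rw [Complex.norm_real, Real.norm_eq_abs, abs_of_nonneg (by nlinarith)]
      _ ≤ 2 * a * d := by nlinarith
  have hmain : S ≤ (2 * a * b) ^ (1 - θ) * (2 * a * d) ^ θ := by
    calc S = S ^ (1 - θ) * S ^ θ := by
            rw [← Real.rpow_add' hS0 (by norm_num)]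
            simp
      _ ≤ (2 * a * b) ^ (1 - θ) * (2 * a * d) ^ θ :=
            mul_le_mul (Real.rpow_le_rpow hS0 h1 (by linarith))
              (Real.rpow_le_rpow hS0 h2 hθ0)
              (Real.rpow_nonneg hS0 _) (Real.rpow_nonneg (by positivity) _)
  refine hmain.trans ?_
  rw [Real.mul_rpow (by positivity) hb0, Real.mul_rpow (by positivity) hd0,
    Real.mul_rpow (by norm_num) ha0, Real.mul_rpow (by norm_num) ha0]
  have h2pow : (2 : ℝ) ^ (1 - θ) * (2 : ℝ) ^ θ = 2 := by
    rw [← Real.rpow_add (by norm_num)]; norm_num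
  have hapow : a ^ (1 - θ) * a ^ θ = a := by
    rw [← Real.rpow_add' ha0 (by norm_num : (1 - θ) + θ ≠ 0)]
    norm_num
  have h2le : (2 : ℝ) ≤ 2 ^ (2 - θ) := by
    calc (2 : ℝ) = 2 ^ (1 : ℝ) := by norm_num
      _ ≤ 2 ^ (2 - θ) := Real.rpow_le_rpow_of_exponent_le (by norm_num) (by linarith)
  calc 2 ^ (1 - θ) * a ^ (1 - θ) * b ^ (1 - θ) * (2 ^ θ * a ^ θ * d ^ θ)
      = (2 ^ (1 - θ) * 2 ^ θ) * (a ^ (1 - θ) * a ^ θ) * b ^ (1 - θ) * d ^ θ := by ring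
    _ = 2 * a * b ^ (1 - θ) * d ^ θ := by rw [h2pow, hapow]
    _ ≤ 2 ^ (2 - θ) * a * b ^ (1 - θ) * d ^ θ := by
        have : 0 ≤ a * (b ^ (1 - θ) * d ^ θ) := by positivity
        nlinarith [this]
end

section
/- For all ξ, ζ ∈ ℂⁿ and every θ ∈ [0,1], one has | 2|ξ||ζ| − ξ·conj(ζ) − conj(ξ)·ζ | ≤ 2^{3−θ} min(|ξ|, |ζ|) · max(|ξ|, |ζ|)^{1−θ} · |ξ − ζ|^{θ}. -/
open scoped BigOperators

set_option maxHeartbeats 1000000 in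
/-- `| 2|ξ||ζ| − ξ·conj ζ − conj ξ·ζ | ≤ 2^{3−θ} min(|ξ|,|ζ|) max(|ξ|,|ζ|)^{1−θ} |ξ−ζ|^θ`. -/
theorem stmt6 (n : ℕ) (θ : ℝ) (hθ0 : 0 ≤ θ) (hθ1 : θ ≤ 1)
    (ξ ζ : EuclideanSpace ℂ (Fin n)) :
    ‖(((2 * ‖ξ‖ * ‖ζ‖ : ℝ) : ℂ) - (∑ j, ξ j * (starRingEnd ℂ) (ζ j))
        - ∑ j, (starRingEnd ℂ) (ξ j) * ζ j)‖ ≤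
      2 ^ (3 - θ) * min ‖ξ‖ ‖ζ‖ * max ‖ξ‖ ‖ζ‖ ^ (1 - θ) * ‖ξ - ζ‖ ^ θ := by
  set a := ‖ξ‖ with ha
  set b := ‖ζ‖ with hb
  set d := ‖ξ - ζ‖ with hd
  set I : ℂ := inner ℂ ξ ζ with hI
  set t : ℝ := I.re with ht
  have hIsum : (∑ j, (starRingEnd ℂ) (ξ j) * ζ j) = I := by
    simp [hI, PiLp.inner_apply, RCLike.inner_apply, mul_comm]
  have hIsum' : (∑ j, ξ j * (starRingEnd ℂ) (ζ j)) = (starRingEnd ℂ) I := by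
    rw [hI]
    simp [PiLp.inner_apply, RCLike.inner_apply, map_sum, mul_comm]
  have key : (((2 * a * b : ℝ) : ℂ) - (∑ j, ξ j * (starRingEnd ℂ) (ζ j))
      - ∑ j, (starRingEnd ℂ) (ξ j) * ζ j) = ((2 * a * b - 2 * t : ℝ) : ℂ) := by
    rw [hIsum, hIsum']
    have : (starRingEnd ℂ) I + I = ((2 * t : ℝ) : ℂ) := by
      rw [add_comm, Complex.add_conj]
    rw [sub_sub, this]
    push_cast
    ring
  rw [key, Complex.norm_real, Real.norm_eq_abs]
  -- basic facts
  have ha0 : 0 ≤ a := norm_nonneg _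
  have hb0 : 0 ≤ b := norm_nonneg _
  have hd0 : 0 ≤ d := norm_nonneg _
  have htab : t ≤ a * b := by
    calc t ≤ ‖I‖ := Complex.re_le_norm I
    _ = ‖I‖ := rfl
    _ ≤ a * b := by rw [hI]; exact norm_inner_le_norm ξ ζ
  have hdsq : d ^ 2 = a ^ 2 - 2 * t + b ^ 2 := by
    rw [hd, ha, hb, ht, hI]
    exact_mod_cast @norm_sub_sq ℂ _ _ _ _ ξ ζ
  have hE0 : 0 ≤ 2 * a * b - 2 * t := by nlinarith
  rw [abs_of_nonneg hE0]
  have habd : |a - b| ≤ d := abs_norm_sub_norm_le ξ ζ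
  have hdab : d ≤ a + b := norm_sub_le ξ ζ
  set m := min a b with hm
  set M := max a b with hM
  have hm0 : 0 ≤ m := le_min ha0 hb0
  have hM0 : 0 ≤ M := le_trans ha0 (le_max_left _ _)
  have habm : a + b - |a - b| = 2 * m := by
    rcases le_total a b with h | h
    · rw [abs_of_nonpos (by linarith), hm, min_eq_left h]; ring
    · rw [abs_of_nonneg (by linarith), hm, min_eq_right h]; ring
  have habM : a + b ≤ 2 * M := by
    have := le_max_left a b
    have := le_max_right a b
    simp only [hM] at *
    rcases le_total a b with h | h <;> simp [max_eq_right, max_eq_left, h] <;> linarith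
  -- E ≤ 4 m d
  have hEfact : 2 * a * b - 2 * t = d ^ 2 - (a - b) ^ 2 := by nlinarith
  have hEbound : 2 * a * b - 2 * t ≤ 4 * m * d := by
    have h1 : d - |a - b| ≤ 2 * m := by
      have := habm; linarith
    have h2 : d + |a - b| ≤ 2 * d := by
      have := habd; linarith
    have h3 : d ^ 2 - (a - b) ^ 2 = (d - |a - b|) * (d + |a - b|) := by
      rw [← sq_abs (a - b)]; ring
    have h4 : 0 ≤ d - |a - b| := by linarith
    have h5 : 0 ≤ d + |a - b| := by positivity
    calc 2 * a * b - 2 * t = (d - |a - b|) * (d + |a - b|) := by rw [hEfact, h3]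
      _ ≤ (2 * m) * (2 * d) := mul_le_mul h1 h2 h5 (by linarith)
      _ = 4 * m * d := by ring
  -- case split on d = 0
  rcases eq_or_lt_of_le hd0 with hd0' | hdpos
  · have hE : 2 * a * b - 2 * t = 0 := by
      have hdz : d = 0 := hd0'.symm
      nlinarith [sq_nonneg (a - b)]
    rw [hE]
    have h1 : (0:ℝ) ≤ 2 ^ (3 - θ) := Real.rpow_nonneg (by norm_num) _
    have h2 : (0:ℝ) ≤ M ^ (1 - θ) := Real.rpow_nonneg hM0 _
    have h3 : (0:ℝ) ≤ d ^ θ := Real.rpow_nonneg hd0 _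
    have := mul_nonneg (mul_nonneg (mul_nonneg h1 hm0) h2) h3
    linarith
  · have hdM : d ≤ 2 * M := le_trans hdab habM
    have step : 4 * m * d ≤ 2 ^ (3 - θ) * m * M ^ (1 - θ) * d ^ θ := by
      have hsplit : d = d ^ (1 - θ) * d ^ θ := by
        rw [← Real.rpow_add hdpos]; norm_num
      have hmono : d ^ (1 - θ) ≤ (2 * M) ^ (1 - θ) :=
        Real.rpow_le_rpow hd0 hdM (by linarith)
      have h2M : (2 * M) ^ (1 - θ) = 2 ^ (1 - θ) * M ^ (1 - θ) :=
        Real.mul_rpow (by norm_num) hM0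
      have h4 : (4 : ℝ) * 2 ^ (1 - θ) = 2 ^ (3 - θ) := by
        have : (4 : ℝ) = 2 ^ (2 : ℝ) := by
          rw [show (2:ℝ) ^ (2:ℝ) = 2 ^ (2:ℕ) by
            rw [← Real.rpow_natCast]; norm_num]
          norm_num
        rw [this, ← Real.rpow_add (by norm_num)]
        congr 1; ring
      calc 4 * m * d = 4 * m * (d ^ (1 - θ) * d ^ θ) := by rw [← hsplit]
        _ ≤ 4 * m * ((2 * M) ^ (1 - θ) * d ^ θ) := by
            apply mul_le_mul_of_nonneg_left
            · exact mul_le_mul_of_nonneg_right hmono (Real.rpow_nonneg hd0 _)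
            · linarith
        _ = 2 ^ (3 - θ) * m * M ^ (1 - θ) * d ^ θ := by
            rw [h2M, ← h4]; ring
    linarith
end

section
/- Let 2 < p < 3 and R > 0. For all ξ, ζ ∈ ℂⁿ with |ξ| < R and |ζ| < R, one has | |ξ|^{p−4} ξ·ξ − |ζ|^{p−4} ζ·ζ | ≤ C R^{(p−2)/2} ( |ξ − ζ|^{(p−2)/2} + R^{(p−2)/4} |ξ − ζ|^{(p−2)/4} ), for a constant C depending only on p and n. -/
open scoped BigOperators

/-- Convexity (Bernoulli) estimate: `a^s - b^s ≤ s a^{s-1} (a-b)` for `0 < b ≤ a`, `1 ≤ s`. -/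
private lemma stmt7_bern {a b s : ℝ} (hb : 0 < b) (hba : b ≤ a) (hs : 1 ≤ s) :
    a ^ s - b ^ s ≤ s * a ^ (s - 1) * (a - b) := by
  have ha : 0 < a := hb.trans_le hba
  have h := one_add_mul_self_le_rpow_one_add (s := b / a - 1) (p := s)
    (by have : 0 ≤ b / a := by positivity
        linarith) hs
  rw [add_sub_cancel, Real.div_rpow hb.le ha.le] at h
  have hA : 0 < a ^ s := Real.rpow_pos_of_pos ha s
  have h' := mul_le_mul_of_nonneg_right h hA.le
  rw [div_mul_cancel₀ _ hA.ne'] at h'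
  have e1 : a ^ (s - 1) * a = a ^ s := by
    rw [← Real.rpow_add_one ha.ne']; ring_nf
  have e3 : b / a * a ^ s = b * a ^ (s - 1) := by
    rw [← e1]; field_simp
  have h2 : (1 + s * (b / a - 1)) * a ^ s
      = a ^ s + s * (b / a * a ^ s) - s * (a ^ (s - 1) * a) := by
    rw [e1]; ring
  rw [h2, e3, e1] at h'
  nlinarith [h']

/-- Negative-exponent version: `b^{-s} - a^{-s} ≤ s b^{-s-1} (a-b)`. -/
private lemma stmt7_bern_neg {a b s : ℝ} (hb : 0 < b) (hba : b ≤ a) (hs : 1 ≤ s) :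
    b ^ (-s) - a ^ (-s) ≤ s * b ^ (-s - 1) * (a - b) := by
  have ha : 0 < a := hb.trans_le hba
  have h := stmt7_bern hb hba hs
  have hA : 0 < a ^ s := Real.rpow_pos_of_pos ha s
  have hB : 0 < b ^ s := Real.rpow_pos_of_pos hb s
  have e1 : a ^ (-s) = (a ^ s)⁻¹ := Real.rpow_neg ha.le s
  have e2 : b ^ (-s) = (b ^ s)⁻¹ := Real.rpow_neg hb.le s
  have e3 : b ^ (-s - 1) = (b ^ s * b)⁻¹ := by
    rw [show -s - 1 = -(s + 1) by ring, Real.rpow_neg hb.le, Real.rpow_add_one hb.ne']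
  have e4 : a ^ (s - 1) * a = a ^ s := by
    rw [← Real.rpow_add_one ha.ne']; ring_nf
  rw [e1, e2, e3, inv_sub_inv hB.ne' hA.ne', div_le_iff₀ (by positivity)]
  have hab : 0 ≤ a - b := by linarith
  have hs0 : 0 < s := by linarith
  calc a ^ s - b ^ s ≤ s * a ^ (s - 1) * (a - b) := h
    _ ≤ s * (b ^ s * b)⁻¹ * (a - b) * (b ^ s * a ^ s) := by
        have hkey : a ^ (s - 1) * b ≤ a ^ s := by
          calc a ^ (s - 1) * b ≤ a ^ (s - 1) * a := by
                have : 0 ≤ a ^ (s - 1) := Real.rpow_nonneg ha.le _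
                nlinarith
            _ = a ^ s := e4
        have hbinv : (b ^ s * b)⁻¹ * (b ^ s * a ^ s) = a ^ s / b := by
          field_simp
        rw [mul_assoc, mul_assoc, mul_assoc]
        apply mul_le_mul_of_nonneg_left _ hs0.le
        rw [← mul_assoc ((b ^ s * b)⁻¹), mul_comm ((b ^ s * b)⁻¹) (a - b), mul_assoc, hbinv]
        rw [div_eq_mul_inv]
        have : a ^ (s - 1) ≤ a ^ s * b⁻¹ := by
          rw [← div_eq_mul_inv, le_div_iff₀ hb]; exact hkey
        nlinarith [Real.rpow_nonneg ha.le s, inv_nonneg.mpr hb.le]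

/-- Cauchy–Schwarz for the bilinear pairing on `ℂⁿ`. -/
private lemma stmt7_bilin {n : ℕ} (x y : EuclideanSpace ℂ (Fin n)) :
    ‖∑ j, x j * y j‖ ≤ ‖x‖ * ‖y‖ := by
  set x' : EuclideanSpace ℂ (Fin n) := WithLp.toLp 2 (fun j => starRingEnd ℂ (x j)) with hx'
  have h1 : (∑ j, x j * y j) = inner ℂ x' y := by
    rw [PiLp.inner_apply]
    refine Finset.sum_congr rfl fun j _ => ?_
    simp [hx', RCLike.inner_apply, mul_comm]
  have h2 : ‖x'‖ = ‖x‖ := by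
    rw [EuclideanSpace.norm_eq, EuclideanSpace.norm_eq]
    congr 1
    refine Finset.sum_congr rfl fun j _ => ?_
    simp [hx']
  rw [h1, ← h2]
  exact norm_inner_le_norm x' y

/-- Difference of bilinear squares. -/
private lemma stmt7_Qdiff {n : ℕ} (ξ ζ : EuclideanSpace ℂ (Fin n)) :
    ‖(∑ j, ξ j * ξ j) - ∑ j, ζ j * ζ j‖ ≤ ‖ξ - ζ‖ * (‖ξ‖ + ‖ζ‖) := by
  have hdecomp : (∑ j, ξ j * ξ j) - ∑ j, ζ j * ζ j
      = (∑ j, (ξ - ζ) j * ξ j) + ∑ j, ζ j * (ξ - ζ) j := by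
    rw [← Finset.sum_add_distrib, ← Finset.sum_sub_distrib]
    refine Finset.sum_congr rfl fun j _ => ?_
    simp only [PiLp.sub_apply]
    ring
  rw [hdecomp]
  calc ‖(∑ j, (ξ - ζ) j * ξ j) + ∑ j, ζ j * (ξ - ζ) j‖
      ≤ ‖∑ j, (ξ - ζ) j * ξ j‖ + ‖∑ j, ζ j * (ξ - ζ) j‖ := norm_add_le _ _
    _ ≤ ‖ξ - ζ‖ * ‖ξ‖ + ‖ζ‖ * ‖ξ - ζ‖ := by
        gcongr
        · exact stmt7_bilin _ _
        · exact stmt7_bilin _ _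
    _ = ‖ξ - ζ‖ * (‖ξ‖ + ‖ζ‖) := by ring

/-- Pointwise bound `‖ |ξ|^{p-4} ξ·ξ ‖ ≤ |ξ|^{p-2}`. -/
private lemma stmt7_fbound {n : ℕ} {p : ℝ} (hp2 : 2 < p) (hp3 : p < 3)
    (ξ : EuclideanSpace ℂ (Fin n)) :
    ‖((‖ξ‖ ^ (p - 4) : ℝ) : ℂ) * ∑ j, ξ j * ξ j‖ ≤ ‖ξ‖ ^ (p - 2) := by
  rcases eq_or_lt_of_le (norm_nonneg ξ) with h | h
  · rw [norm_mul]
    simp [← h, Real.zero_rpow (show p - 4 ≠ 0 by intro hc; linarith),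
      Real.zero_rpow (show p - 2 ≠ 0 by intro hc; linarith)]
  · rw [norm_mul, Complex.norm_real, Real.norm_eq_abs,
      abs_of_nonneg (Real.rpow_nonneg (norm_nonneg ξ) _)]
    calc ‖ξ‖ ^ (p - 4) * ‖∑ j, ξ j * ξ j‖
        ≤ ‖ξ‖ ^ (p - 4) * (‖ξ‖ * ‖ξ‖) := by
          apply mul_le_mul_of_nonneg_left (stmt7_bilin ξ ξ)
          exact Real.rpow_nonneg (norm_nonneg ξ) _
      _ = ‖ξ‖ ^ (p - 2) := by
          rw [← mul_assoc, ← Real.rpow_add_one h.ne', ← Real.rpow_add_one h.ne']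
          ring_nf

/-- Hölder-type estimate, ordered version. -/
private lemma stmt7_core_aux {n : ℕ} {p : ℝ} (hp2 : 2 < p) (hp3 : p < 3)
    (ξ ζ : EuclideanSpace ℂ (Fin n)) (hba : ‖ζ‖ ≤ ‖ξ‖) :
    ‖((‖ξ‖ ^ (p - 4) : ℝ) : ℂ) * (∑ j, ξ j * ξ j) -
        ((‖ζ‖ ^ (p - 4) : ℝ) : ℂ) * ∑ j, ζ j * ζ j‖ ≤ 4 * ‖ξ - ζ‖ ^ (p - 2) := by
  by_cases hxz : ξ = ζ
  · simp [hxz, Real.zero_rpow (show p - 2 ≠ 0 by intro hc; linarith)]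
  set a := ‖ξ‖ with haa
  set b := ‖ζ‖ with hbb
  set d := ‖ξ - ζ‖ with hdd
  have hd : 0 < d := by
    rw [hdd, norm_pos_iff]; exact sub_ne_zero_of_ne hxz
  have ha0 : 0 ≤ a := norm_nonneg _
  have hb0 : 0 ≤ b := norm_nonneg _
  have habd : a ≤ b + d := by
    have := norm_sub_norm_le ξ ζ
    rw [← haa, ← hbb, ← hdd] at this; linarith
  have hdn : 0 ≤ d ^ (p - 2) := Real.rpow_nonneg hd.le _
  by_cases hca : a ≤ 2 * d
  · -- small a: crude bound
    calc ‖((a ^ (p - 4) : ℝ) : ℂ) * (∑ j, ξ j * ξ j) -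
            ((b ^ (p - 4) : ℝ) : ℂ) * ∑ j, ζ j * ζ j‖
        ≤ ‖((a ^ (p - 4) : ℝ) : ℂ) * ∑ j, ξ j * ξ j‖ +
            ‖((b ^ (p - 4) : ℝ) : ℂ) * ∑ j, ζ j * ζ j‖ := norm_sub_le _ _
      _ ≤ a ^ (p - 2) + b ^ (p - 2) :=
          add_le_add (stmt7_fbound hp2 hp3 ξ) (stmt7_fbound hp2 hp3 ζ)
      _ ≤ a ^ (p - 2) + a ^ (p - 2) := by
          have := Real.rpow_le_rpow hb0 hba (by linarith : (0:ℝ) ≤ p - 2)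
          linarith
      _ = 2 * a ^ (p - 2) := by ring
      _ ≤ 2 * (2 * d) ^ (p - 2) := by
          have := Real.rpow_le_rpow ha0 hca (by linarith : (0:ℝ) ≤ p - 2)
          linarith
      _ = 2 * (2 ^ (p - 2) * d ^ (p - 2)) := by
          rw [Real.mul_rpow (by norm_num) hd.le]
      _ ≤ 4 * d ^ (p - 2) := by
          have h2 : (2 : ℝ) ^ (p - 2) ≤ 2 ^ (1 : ℝ) :=
            Real.rpow_le_rpow_of_exponent_le one_le_two (by linarith)
          rw [Real.rpow_one] at h2
          nlinarith
  · -- large a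
    push_neg at hca
    have ha : 0 < a := lt_trans (by linarith) hca
    have hdb : d < b := by linarith
    have hb : 0 < b := hd.trans hdb
    have hda : d ≤ a := by linarith
    have hdp3 : d ^ (p - 3) * d = d ^ (p - 2) := by
      rw [← Real.rpow_add_one hd.ne']; ring_nf
    -- decomposition
    have hdecomp : ((a ^ (p - 4) : ℝ) : ℂ) * (∑ j, ξ j * ξ j) -
        ((b ^ (p - 4) : ℝ) : ℂ) * ∑ j, ζ j * ζ j
        = ((a ^ (p - 4) : ℝ) : ℂ) * ((∑ j, ξ j * ξ j) - ∑ j, ζ j * ζ j) +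
          (((a ^ (p - 4) - b ^ (p - 4) : ℝ)) : ℂ) * ∑ j, ζ j * ζ j := by
      push_cast; ring
    rw [hdecomp]
    have hT1 : ‖((a ^ (p - 4) : ℝ) : ℂ) * ((∑ j, ξ j * ξ j) - ∑ j, ζ j * ζ j)‖
        ≤ 2 * d ^ (p - 2) := by
      rw [norm_mul, Complex.norm_real, Real.norm_eq_abs,
        abs_of_nonneg (Real.rpow_nonneg ha0 _)]
      calc a ^ (p - 4) * ‖(∑ j, ξ j * ξ j) - ∑ j, ζ j * ζ j‖
          ≤ a ^ (p - 4) * (d * (a + b)) := by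
            apply mul_le_mul_of_nonneg_left (stmt7_Qdiff ξ ζ) (Real.rpow_nonneg ha0 _)
        _ ≤ a ^ (p - 4) * (d * (2 * a)) := by
            have h0 := Real.rpow_nonneg ha0 (p - 4)
            have h1 : d * (a + b) ≤ d * (2 * a) :=
              mul_le_mul_of_nonneg_left (by linarith) hd.le
            exact mul_le_mul_of_nonneg_left h1 h0
        _ = 2 * (a ^ (p - 4) * a) * d := by ring
        _ = 2 * a ^ (p - 3) * d := by
            rw [← Real.rpow_add_one ha.ne']; ring_nf
        _ ≤ 2 * d ^ (p - 3) * d := by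
            have : a ^ (p - 3) ≤ d ^ (p - 3) :=
              Real.rpow_le_rpow_of_nonpos hd hda (by linarith)
            nlinarith
        _ = 2 * d ^ (p - 2) := by rw [mul_assoc, hdp3]
    have hT2 : ‖(((a ^ (p - 4) - b ^ (p - 4) : ℝ)) : ℂ) * ∑ j, ζ j * ζ j‖
        ≤ 2 * d ^ (p - 2) := by
      rw [norm_mul, Complex.norm_real, Real.norm_eq_abs]
      have hmono : a ^ (p - 4) ≤ b ^ (p - 4) :=
        Real.rpow_le_rpow_of_nonpos hb hba (by linarith)
      rw [abs_of_nonpos (by linarith), neg_sub]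
      have hbern := stmt7_bern_neg hb hba (s := 4 - p) (by linarith)
      rw [show -(4 - p) = p - 4 by ring] at hbern
      rw [show p - 4 - 1 = p - 5 by ring] at hbern
      -- b^{p-4} - a^{p-4} ≤ (4-p) * b^{p-5} * (a - b)
      have hQb : ‖∑ j, ζ j * ζ j‖ ≤ b * b := by
        have := stmt7_bilin ζ ζ; rw [← hbb] at this; exact this
      have hb5 : 0 ≤ b ^ (p - 5) := Real.rpow_nonneg hb0 _
      have hab : a - b ≤ d := by linarith
      have hab0 : 0 ≤ a - b := by linarith
      calc (b ^ (p - 4) - a ^ (p - 4)) * ‖∑ j, ζ j * ζ j‖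
          ≤ ((4 - p) * b ^ (p - 5) * (a - b)) * (b * b) := by
            apply mul_le_mul hbern hQb (norm_nonneg _)
            exact mul_nonneg (mul_nonneg (by linarith) hb5) hab0
        _ = (4 - p) * (b ^ (p - 5) * b * b) * (a - b) := by ring
        _ = (4 - p) * b ^ (p - 3) * (a - b) := by
            rw [← Real.rpow_add_one hb.ne', ← Real.rpow_add_one hb.ne']; ring_nf
        _ ≤ 2 * d ^ (p - 3) * d := by
            have h1 : b ^ (p - 3) ≤ d ^ (p - 3) :=
              Real.rpow_le_rpow_of_nonpos hd hdb.le (by linarith)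
            have h2 : 0 ≤ b ^ (p - 3) := Real.rpow_nonneg hb0 _
            have h3 : 0 ≤ d ^ (p - 3) := Real.rpow_nonneg hd.le _
            have s1 : (4 - p) * b ^ (p - 3) * (a - b) ≤ 2 * b ^ (p - 3) * (a - b) := by
              nlinarith [mul_nonneg h2 hab0]
            have s2 : 2 * b ^ (p - 3) * (a - b) ≤ 2 * d ^ (p - 3) * (a - b) := by
              nlinarith [mul_le_mul_of_nonneg_right h1 hab0]
            have s3 : 2 * d ^ (p - 3) * (a - b) ≤ 2 * d ^ (p - 3) * d := by
              nlinarith [mul_le_mul_of_nonneg_left hab h3]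
            linarith
        _ = 2 * d ^ (p - 2) := by rw [mul_assoc, hdp3]
    calc ‖((a ^ (p - 4) : ℝ) : ℂ) * ((∑ j, ξ j * ξ j) - ∑ j, ζ j * ζ j) +
            (((a ^ (p - 4) - b ^ (p - 4) : ℝ)) : ℂ) * ∑ j, ζ j * ζ j‖
        ≤ ‖((a ^ (p - 4) : ℝ) : ℂ) * ((∑ j, ξ j * ξ j) - ∑ j, ζ j * ζ j)‖ +
            ‖(((a ^ (p - 4) - b ^ (p - 4) : ℝ)) : ℂ) * ∑ j, ζ j * ζ j‖ := norm_add_le _ _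
      _ ≤ 2 * d ^ (p - 2) + 2 * d ^ (p - 2) := add_le_add hT1 hT2
      _ = 4 * d ^ (p - 2) := by ring

/-- Hölder-type estimate. -/
private lemma stmt7_core {n : ℕ} {p : ℝ} (hp2 : 2 < p) (hp3 : p < 3)
    (ξ ζ : EuclideanSpace ℂ (Fin n)) :
    ‖((‖ξ‖ ^ (p - 4) : ℝ) : ℂ) * (∑ j, ξ j * ξ j) -
        ((‖ζ‖ ^ (p - 4) : ℝ) : ℂ) * ∑ j, ζ j * ζ j‖ ≤ 4 * ‖ξ - ζ‖ ^ (p - 2) := by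
  rcases le_total ‖ζ‖ ‖ξ‖ with h | h
  · exact stmt7_core_aux hp2 hp3 ξ ζ h
  · have := stmt7_core_aux hp2 hp3 ζ ξ h
    rw [norm_sub_rev ζ ξ] at this
    calc ‖((‖ξ‖ ^ (p - 4) : ℝ) : ℂ) * (∑ j, ξ j * ξ j) -
            ((‖ζ‖ ^ (p - 4) : ℝ) : ℂ) * ∑ j, ζ j * ζ j‖
        = ‖((‖ζ‖ ^ (p - 4) : ℝ) : ℂ) * (∑ j, ζ j * ζ j) -
            ((‖ξ‖ ^ (p - 4) : ℝ) : ℂ) * ∑ j, ξ j * ξ j‖ := norm_sub_rev _ _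
      _ ≤ 4 * ‖ξ - ζ‖ ^ (p - 2) := this

/-- Estimate for `| |ξ|^{p−4} ξ·ξ − |ζ|^{p−4} ζ·ζ |`, `2 < p < 3`. -/
theorem stmt7 (n : ℕ) (p : ℝ) (hp2 : 2 < p) (hp3 : p < 3) :
    ∃ C > (0 : ℝ), ∀ R > (0 : ℝ),
      ∀ ξ ζ : EuclideanSpace ℂ (Fin n), ‖ξ‖ < R → ‖ζ‖ < R →
        ‖(((‖ξ‖ ^ (p - 4) : ℝ) : ℂ) * ∑ j, ξ j * ξ j -
            ((‖ζ‖ ^ (p - 4) : ℝ) : ℂ) * ∑ j, ζ j * ζ j)‖ ≤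
          C * R ^ ((p - 2) / 2) *
            (‖ξ - ζ‖ ^ ((p - 2) / 2) + R ^ ((p - 2) / 4) * ‖ξ - ζ‖ ^ ((p - 2) / 4)) := by
  refine ⟨8, by norm_num, fun R hR ξ ζ hξ hζ => ?_⟩
  have hcore := stmt7_core hp2 hp3 ξ ζ
  set d := ‖ξ - ζ‖ with hdd
  have hd0 : 0 ≤ d := norm_nonneg _
  have hd2R : d ≤ 2 * R := by
    have := norm_sub_le ξ ζ
    rw [← hdd] at this; linarith
  have hsplit : d ^ (p - 2) = d ^ ((p - 2) / 2) * d ^ ((p - 2) / 2) := by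
    rw [← Real.rpow_add' hd0 (by intro hc; apply absurd hc; simp; linarith)]
    ring_nf
  have h1 : d ^ ((p - 2) / 2) ≤ 2 * R ^ ((p - 2) / 2) := by
    calc d ^ ((p - 2) / 2) ≤ (2 * R) ^ ((p - 2) / 2) :=
          Real.rpow_le_rpow hd0 hd2R (by linarith)
      _ = 2 ^ ((p - 2) / 2) * R ^ ((p - 2) / 2) :=
          Real.mul_rpow (by norm_num) hR.le
      _ ≤ 2 * R ^ ((p - 2) / 2) := by
          have h2 : (2 : ℝ) ^ ((p - 2) / 2) ≤ 2 ^ (1 : ℝ) :=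
            Real.rpow_le_rpow_of_exponent_le one_le_two (by linarith)
          rw [Real.rpow_one] at h2
          have : 0 ≤ R ^ ((p - 2) / 2) := Real.rpow_nonneg hR.le _
          nlinarith
  have habs : ‖(((‖ξ‖ ^ (p - 4) : ℝ) : ℂ) * ∑ j, ξ j * ξ j -
      ((‖ζ‖ ^ (p - 4) : ℝ) : ℂ) * ∑ j, ζ j * ζ j)‖
      = ‖((‖ξ‖ ^ (p - 4) : ℝ) : ℂ) * (∑ j, ξ j * ξ j) -
        ((‖ζ‖ ^ (p - 4) : ℝ) : ℂ) * ∑ j, ζ j * ζ j‖ := by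
    rfl
  rw [habs]
  have hnn : 0 ≤ R ^ ((p - 2) / 4) * d ^ ((p - 2) / 4) := by positivity
  have hRn : 0 ≤ R ^ ((p - 2) / 2) := Real.rpow_nonneg hR.le _
  have hdn : 0 ≤ d ^ ((p - 2) / 2) := Real.rpow_nonneg hd0 _
  calc ‖((‖ξ‖ ^ (p - 4) : ℝ) : ℂ) * (∑ j, ξ j * ξ j) -
        ((‖ζ‖ ^ (p - 4) : ℝ) : ℂ) * ∑ j, ζ j * ζ j‖
      ≤ 4 * d ^ (p - 2) := hcore
    _ = 4 * (d ^ ((p - 2) / 2) * d ^ ((p - 2) / 2)) := by rw [hsplit]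
    _ ≤ 4 * (2 * R ^ ((p - 2) / 2) * d ^ ((p - 2) / 2)) := by nlinarith
    _ = 8 * R ^ ((p - 2) / 2) * d ^ ((p - 2) / 2) := by ring
    _ ≤ 8 * R ^ ((p - 2) / 2) * (d ^ ((p - 2) / 2) + R ^ ((p - 2) / 4) * d ^ ((p - 2) / 4)) := by
        nlinarith
end

section
/- Let p > 2, R > 0, and for ξ, ζ ∈ ℂⁿ with |ξ|, |ζ| < R define the n×n matrices A with entries A_{jk} = |ξ|^{p−4} ξⱼ conj(ξₖ) − |ζ|^{p−4} ζⱼ conj(ζₖ) and B with entries B_{jk} = |ξ|^{p−4} ξⱼ ξₖ − |ζ|^{p−4} ζⱼ ζₖ. Then for every symmetric complex n×n matrix H (Hᵀ = H), one has | tr(A H + B conj(H)) | ≤ C R^{μ} ‖H‖ |ξ − ζ|^{(1/4) min(p−2, 1)}, where ‖H‖ = max_{j,k} |H_{jk}| and C, μ > 0 depend only on p and n. -/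
open scoped BigOperators

private lemma stmt8_coord_le {n : ℕ} (ξ : EuclideanSpace ℂ (Fin n)) (j : Fin n) :
    ‖ξ j‖ ≤ ‖ξ‖ := by
  rw [EuclideanSpace.norm_eq]
  rw [show ‖ξ j‖ = Real.sqrt (‖ξ j‖ ^ 2) by rw [Real.sqrt_sq (norm_nonneg _)]]
  apply Real.sqrt_le_sqrt
  exact Finset.single_le_sum (fun i _ => sq_nonneg ‖ξ i‖) (Finset.mem_univ j)

private lemma stmt8_mvt (q : ℝ) {s r : ℝ} (hs : 0 < s) (hsr : s ≤ r) :
    |r ^ q - s ^ q| ≤ |q| * max (s ^ (q - 1)) (r ^ (q - 1)) * (r - s) := by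
  set K := |q| * max (s ^ (q - 1)) (r ^ (q - 1)) with hK
  have bound : ∀ x ∈ Set.Icc s r, ‖q * x ^ (q - 1)‖ ≤ K := by
    intro x hx
    have hx0 : 0 < x := lt_of_lt_of_le hs hx.1
    rw [Real.norm_eq_abs, abs_mul, abs_of_nonneg (Real.rpow_nonneg hx0.le _), hK]
    apply mul_le_mul_of_nonneg_left _ (abs_nonneg q)
    rcases le_or_gt 0 (q - 1) with h1 | h1
    · exact le_max_of_le_right (Real.rpow_le_rpow hx0.le hx.2 h1)
    · exact le_max_of_le_left (Real.rpow_le_rpow_of_nonpos hs hx.1 h1.le)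
  have h := Convex.norm_image_sub_le_of_norm_hasDerivWithin_le
    (f := fun t : ℝ => t ^ q) (f' := fun t : ℝ => q * t ^ (q - 1)) (s := Set.Icc s r)
    (fun x hx => (Real.hasDerivAt_rpow_const (p := q)
      (Or.inl (ne_of_gt (lt_of_lt_of_le hs hx.1)))).hasDerivWithinAt)
    bound (convex_Icc s r) (Set.left_mem_Icc.2 hsr) (Set.right_mem_Icc.2 hsr)
  simp only [Real.norm_eq_abs] at h
  rw [abs_of_nonneg (by linarith : (0:ℝ) ≤ r - s)] at h
  exact h

private lemma stmt8_half_rpow {a b : ℝ} (ha : 0 < a) (hab : a / 2 ≤ b) (hba : b ≤ a) (t : ℝ) :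
    b ^ t ≤ max 1 ((2 : ℝ) ^ (-t)) * a ^ t := by
  have hb : 0 < b := lt_of_lt_of_le (by linarith) hab
  rcases le_or_gt 0 t with ht | ht
  · calc b ^ t ≤ a ^ t := Real.rpow_le_rpow hb.le hba ht
      _ = 1 * a ^ t := (one_mul _).symm
      _ ≤ _ := mul_le_mul_of_nonneg_right (le_max_left _ _) (Real.rpow_nonneg ha.le _)
  · calc b ^ t ≤ (a / 2) ^ t := Real.rpow_le_rpow_of_nonpos (by linarith) hab ht.le
      _ = a ^ t * ((2:ℝ) ^ t)⁻¹ := by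
          rw [Real.div_rpow ha.le (by norm_num), div_eq_mul_inv]
      _ = (2:ℝ) ^ (-t) * a ^ t := by rw [Real.rpow_neg (by norm_num)]; ring
      _ ≤ _ := mul_le_mul_of_nonneg_right (le_max_right _ _) (Real.rpow_nonneg ha.le _)

private lemma stmt8_term_bound (p : ℝ) (hp : 2 < p) {b : ℝ} (hb : 0 ≤ b) {u v : ℂ}
    (hu : ‖u‖ ≤ b) (hv : ‖v‖ ≤ b) :
    ‖((b ^ (p - 4) : ℝ) : ℂ) * u * v‖ ≤ b ^ (p - 2) := by
  rcases eq_or_lt_of_le hb with hb0 | hb0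
  · have hu0 : u = 0 := by rw [← norm_le_zero_iff]; rw [← hb0] at hu; exact hu
    simp only [hu0, mul_zero, zero_mul, norm_zero]
    exact Real.rpow_nonneg hb _
  · rw [norm_mul, norm_mul, Complex.norm_real, Real.norm_eq_abs,
      abs_of_nonneg (Real.rpow_nonneg hb0.le _)]
    calc b ^ (p - 4) * ‖u‖ * ‖v‖ ≤ b ^ (p - 4) * b * b := by
          apply mul_le_mul (mul_le_mul_of_nonneg_left hu (Real.rpow_nonneg hb0.le _)) hv
            (norm_nonneg _) (by positivity)
      _ = b ^ (p - 2) := by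
          rw [show b ^ (p-4) * b * b = b ^ (p-4) * b ^ (1:ℝ) * b ^ (1:ℝ) by
            rw [Real.rpow_one], ← Real.rpow_add hb0, ← Real.rpow_add hb0]
          congr 1; ring

private lemma stmt8_core_aux (p : ℝ) (hp : 2 < p) :
    ∃ C > (0 : ℝ), ∀ a b d : ℝ, 0 ≤ b → b ≤ a → |a - b| ≤ d →
      ∀ x y u v : ℂ, ‖x‖ ≤ a → ‖y‖ ≤ a → ‖u‖ ≤ b → ‖v‖ ≤ b →
        ‖x - u‖ ≤ d → ‖y - v‖ ≤ d →
        ‖((a ^ (p - 4) : ℝ) : ℂ) * x * y - ((b ^ (p - 4) : ℝ) : ℂ) * u * v‖ ≤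
          C * a ^ (p - 2 - 1 / 4 * min (p - 2) 1) * d ^ (1 / 4 * min (p - 2) 1) := by
  set α : ℝ := 1 / 4 * min (p - 2) 1 with hαdef
  have hα0 : 0 < α := by
    have : 0 < min (p - 2) 1 := lt_min (by linarith) one_pos
    positivity
  have hα1 : α ≤ 1 / 4 := by
    have : min (p - 2) 1 ≤ 1 := min_le_right _ _
    rw [hαdef]; linarith
  have hαp : α < p - 2 := by
    have h1 : min (p - 2) 1 ≤ p - 2 := min_le_left _ _
    have h2 : 0 < min (p - 2) 1 := lt_min (by linarith) one_pos
    rw [hαdef]; nlinarith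
  set q : ℝ := p - 4 with hqdef
  set c1 : ℝ := max 1 ((2:ℝ) ^ (-(q - 1))) with hc1
  set c2 : ℝ := max 1 ((2:ℝ) ^ (-q)) with hc2
  set c3 : ℝ := max 1 ((2:ℝ) ^ (-(q + 1))) with hc3
  have hc1p : 0 < c1 := lt_of_lt_of_le one_pos (le_max_left _ _)
  have hc2p : 0 < c2 := lt_of_lt_of_le one_pos (le_max_left _ _)
  have hc3p : 0 < c3 := lt_of_lt_of_le one_pos (le_max_left _ _)
  refine ⟨2 * 2 ^ α + (|q| * c1 + c2 + c3), by positivity, ?_⟩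
  intro a b d hb hba habd x y u v hx hy hu hv hxu hyv
  have ha : 0 ≤ a := le_trans hb hba
  have hd : 0 ≤ d := le_trans (abs_nonneg _) habd
  set C : ℝ := 2 * 2 ^ α + (|q| * c1 + c2 + c3) with hC
  have hC0 : (0:ℝ) < C := by positivity
  have hRHS : 0 ≤ a ^ (p - 2 - α) * d ^ α := by positivity
  -- trivial case d = 0
  rcases eq_or_lt_of_le hd with hd0 | hd0
  · have hab : a = b := by rw [abs_le] at habd; linarith [habd.1, habd.2]
    have hxu0 : x = u := by rw [← sub_eq_zero, ← norm_le_zero_iff]; rw [← hd0] at hxu; exact hxu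
    have hyv0 : y = v := by rw [← sub_eq_zero, ← norm_le_zero_iff]; rw [← hd0] at hyv; exact hyv
    rw [hab, hxu0, hyv0, sub_self, norm_zero]
    positivity
  rcases le_or_gt a (2 * d) with hcase | hcase
  · -- crude case: a ≤ 2d
    have h1 : ‖((a ^ q : ℝ) : ℂ) * x * y - ((b ^ q : ℝ) : ℂ) * u * v‖ ≤
        a ^ (p - 2) + b ^ (p - 2) :=
      le_trans (norm_sub_le _ _)
        (add_le_add (stmt8_term_bound p hp ha hx hy) (stmt8_term_bound p hp hb hu hv))
    have h2 : b ^ (p - 2) ≤ a ^ (p - 2) := Real.rpow_le_rpow hb hba (by linarith)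
    rcases eq_or_lt_of_le ha with ha0 | ha0
    · -- a = 0
      have : a ^ (p - 2) = 0 := by rw [← ha0]; exact Real.zero_rpow (by linarith)
      calc ‖_‖ ≤ a ^ (p-2) + b ^ (p-2) := h1
        _ ≤ 0 := by linarith
        _ ≤ _ := by positivity
    · have h3 : a ^ (p - 2) = a ^ (p - 2 - α) * a ^ α := by
        rw [← Real.rpow_add ha0]; congr 1; ring
      have h4 : a ^ α ≤ (2 * d) ^ α := Real.rpow_le_rpow ha hcase hα0.le
      have h5 : (2 * d) ^ α = 2 ^ α * d ^ α := Real.mul_rpow (by norm_num) hd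
      calc ‖_‖ ≤ a ^ (p-2) + b ^ (p-2) := h1
        _ ≤ 2 * a ^ (p - 2) := by linarith
        _ = 2 * (a ^ (p - 2 - α) * a ^ α) := by rw [h3]
        _ ≤ 2 * (a ^ (p - 2 - α) * (2 ^ α * d ^ α)) := by
            apply mul_le_mul_of_nonneg_left _ (by norm_num)
            apply mul_le_mul_of_nonneg_left _ (Real.rpow_nonneg ha _)
            rw [← h5]; exact h4
        _ = (2 * 2 ^ α) * (a ^ (p - 2 - α) * d ^ α) := by ring
        _ ≤ C * (a ^ (p - 2 - α) * d ^ α) := by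
            apply mul_le_mul_of_nonneg_right _ hRHS
            rw [hC]
            have : 0 ≤ |q| * c1 + c2 + c3 := by positivity
            linarith
        _ = C * a ^ (p - 2 - α) * d ^ α := by ring
  · -- main case: 2d < a
    have ha0 : 0 < a := lt_trans (by linarith) hcase
    have hbd : a / 2 ≤ b := by
      rw [abs_le] at habd
      linarith [habd.1, habd.2]
    have hb0 : 0 < b := lt_of_lt_of_le (by linarith) hbd
    have hda : d ≤ a := by linarith
    -- decomposition
    have hdecomp : ((a ^ q : ℝ) : ℂ) * x * y - ((b ^ q : ℝ) : ℂ) * u * v =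
        ((a ^ q - b ^ q : ℝ) : ℂ) * (x * y) + ((b ^ q : ℝ) : ℂ) * ((x - u) * y)
          + ((b ^ q : ℝ) : ℂ) * (u * (y - v)) := by
      push_cast
      ring
    have T1 : ‖((a ^ q - b ^ q : ℝ) : ℂ) * (x * y)‖ ≤ |q| * c1 * (a ^ (p - 3) * d) := by
      rw [norm_mul, Complex.norm_real, Real.norm_eq_abs]
      have hmvt := stmt8_mvt q hb0 hba
      have hmax : max (b ^ (q-1)) (a ^ (q-1)) ≤ c1 * a ^ (q-1) := by
        apply max_le
        · exact stmt8_half_rpow ha0 hbd hba (q - 1)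
        · calc a ^ (q-1) = 1 * a ^ (q-1) := (one_mul _).symm
            _ ≤ c1 * a ^ (q-1) := mul_le_mul_of_nonneg_right (le_max_left _ _)
                (Real.rpow_nonneg ha _)
      have hab2 : a - b ≤ d := by rw [abs_le] at habd; exact habd.2
      have h1 : |a ^ q - b ^ q| ≤ |q| * (c1 * a ^ (q-1)) * d := by
        calc |a ^ q - b ^ q| ≤ |q| * max (b ^ (q-1)) (a ^ (q-1)) * (a - b) := hmvt
          _ ≤ |q| * (c1 * a ^ (q-1)) * d := by
              apply mul_le_mul
              · exact mul_le_mul_of_nonneg_left hmax (abs_nonneg _)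
              · exact hab2
              · linarith [abs_nonneg (a - b), habd, (abs_le.mp habd)]
              · positivity
      have h2 : ‖x * y‖ ≤ a * a := by
        rw [norm_mul]
        exact mul_le_mul hx hy (norm_nonneg _) ha
      calc |a ^ q - b ^ q| * ‖x * y‖ ≤ (|q| * (c1 * a ^ (q-1)) * d) * (a * a) := by
            apply mul_le_mul h1 h2 (norm_nonneg _) (by positivity)
        _ = |q| * c1 * ((a ^ (q-1) * a ^ (1:ℝ) * a ^ (1:ℝ)) * d) := by
            rw [Real.rpow_one]; ring
        _ = |q| * c1 * (a ^ (p - 3) * d) := by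
            rw [← Real.rpow_add ha0, ← Real.rpow_add ha0]
            congr 2
            rw [hqdef]; ring
    have hbq : b ^ q ≤ c2 * a ^ q := stmt8_half_rpow ha0 hbd hba q
    have hbq1 : b ^ (q + 1) ≤ c3 * a ^ (q + 1) := stmt8_half_rpow ha0 hbd hba (q + 1)
    have T2 : ‖((b ^ q : ℝ) : ℂ) * ((x - u) * y)‖ ≤ c2 * (a ^ (p - 3) * d) := by
      rw [norm_mul, Complex.norm_real, Real.norm_eq_abs,
        abs_of_nonneg (Real.rpow_nonneg hb0.le _), norm_mul]
      calc b ^ q * (‖x - u‖ * ‖y‖) ≤ (c2 * a ^ q) * (d * a) := by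
            apply mul_le_mul hbq (mul_le_mul hxu hy (norm_nonneg _) hd)
              (by positivity) (by positivity)
        _ = c2 * ((a ^ q * a ^ (1:ℝ)) * d) := by rw [Real.rpow_one]; ring
        _ = c2 * (a ^ (p - 3) * d) := by
            rw [← Real.rpow_add ha0]; congr 2; rw [hqdef]; ring
    have T3 : ‖((b ^ q : ℝ) : ℂ) * (u * (y - v))‖ ≤ c3 * (a ^ (p - 3) * d) := by
      rw [norm_mul, Complex.norm_real, Real.norm_eq_abs,
        abs_of_nonneg (Real.rpow_nonneg hb0.le _), norm_mul]
      calc b ^ q * (‖u‖ * ‖y - v‖) ≤ b ^ q * (b * d) := by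
            apply mul_le_mul_of_nonneg_left (mul_le_mul hu hyv (norm_nonneg _) hb)
              (Real.rpow_nonneg hb0.le _)
        _ = b ^ (q + 1) * d := by rw [Real.rpow_add hb0, Real.rpow_one]; ring
        _ ≤ (c3 * a ^ (q + 1)) * d := mul_le_mul_of_nonneg_right hbq1 hd
        _ = c3 * (a ^ (p - 3) * d) := by
            rw [show q + 1 = p - 3 by rw [hqdef]; ring]; ring
    have hd1 : a ^ (p - 3) * d ≤ a ^ (p - 2 - α) * d ^ α := by
      have e1 : d = d ^ (1 - α) * d ^ α := by
        rw [← Real.rpow_add hd0, ← Real.rpow_one d]; congr 1; simp; ring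
      have e2 : d ^ (1 - α) ≤ a ^ (1 - α) := Real.rpow_le_rpow hd hda (by linarith)
      calc a ^ (p - 3) * d = a ^ (p - 3) * (d ^ (1 - α) * d ^ α) := by rw [← e1]
        _ ≤ a ^ (p - 3) * (a ^ (1 - α) * d ^ α) := by
            apply mul_le_mul_of_nonneg_left _ (Real.rpow_nonneg ha _)
            exact mul_le_mul_of_nonneg_right e2 (Real.rpow_nonneg hd _)
        _ = (a ^ (p - 3) * a ^ (1 - α)) * d ^ α := by ring
        _ = a ^ (p - 2 - α) * d ^ α := by
            rw [← Real.rpow_add ha0]; congr 1; ring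
    calc ‖((a ^ q : ℝ) : ℂ) * x * y - ((b ^ q : ℝ) : ℂ) * u * v‖
        = ‖((a ^ q - b ^ q : ℝ) : ℂ) * (x * y) + ((b ^ q : ℝ) : ℂ) * ((x - u) * y)
          + ((b ^ q : ℝ) : ℂ) * (u * (y - v))‖ := by rw [hdecomp]
      _ ≤ ‖((a ^ q - b ^ q : ℝ) : ℂ) * (x * y)‖ + ‖((b ^ q : ℝ) : ℂ) * ((x - u) * y)‖
          + ‖((b ^ q : ℝ) : ℂ) * (u * (y - v))‖ :=
          le_trans (norm_add_le _ _) (by gcongr; exact norm_add_le _ _)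
      _ ≤ (|q| * c1 + c2 + c3) * (a ^ (p - 3) * d) := by
          have := add_le_add (add_le_add T1 T2) T3
          linarith [this]
      _ ≤ (|q| * c1 + c2 + c3) * (a ^ (p - 2 - α) * d ^ α) := by
          apply mul_le_mul_of_nonneg_left hd1 (by positivity)
      _ ≤ C * (a ^ (p - 2 - α) * d ^ α) := by
          apply mul_le_mul_of_nonneg_right _ hRHS
          rw [hC]
          have : (0:ℝ) ≤ 2 * 2 ^ α := by positivity
          linarith
      _ = C * a ^ (p - 2 - α) * d ^ α := by ring

private lemma stmt8_core (p : ℝ) (hp : 2 < p) :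
    ∃ C > (0 : ℝ), ∀ R > (0 : ℝ), ∀ a b d : ℝ, 0 ≤ a → 0 ≤ b → a < R → b < R → |a - b| ≤ d →
      ∀ x y u v : ℂ, ‖x‖ ≤ a → ‖y‖ ≤ a → ‖u‖ ≤ b → ‖v‖ ≤ b →
        ‖x - u‖ ≤ d → ‖y - v‖ ≤ d →
        ‖((a ^ (p - 4) : ℝ) : ℂ) * x * y - ((b ^ (p - 4) : ℝ) : ℂ) * u * v‖ ≤
          C * R ^ (p - 2 - 1 / 4 * min (p - 2) 1) * d ^ (1 / 4 * min (p - 2) 1) := by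
  obtain ⟨C, hC0, hC⟩ := stmt8_core_aux p hp
  refine ⟨C, hC0, ?_⟩
  intro R hR a b d ha hb haR hbR habd x y u v hx hy hu hv hxu hyv
  have hd : 0 ≤ d := le_trans (abs_nonneg _) habd
  have hμ : 0 ≤ p - 2 - 1 / 4 * min (p - 2) 1 := by
    have h1 : min (p - 2) 1 ≤ p - 2 := min_le_left _ _
    nlinarith [lt_min (show (0:ℝ) < p - 2 by linarith) one_pos]
  have hmono : ∀ m : ℝ, 0 ≤ m → m < R →
      C * m ^ (p - 2 - 1 / 4 * min (p - 2) 1) * d ^ (1 / 4 * min (p - 2) 1) ≤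
      C * R ^ (p - 2 - 1 / 4 * min (p - 2) 1) * d ^ (1 / 4 * min (p - 2) 1) := by
    intro m hm hmR
    apply mul_le_mul_of_nonneg_right _ (Real.rpow_nonneg hd _)
    exact mul_le_mul_of_nonneg_left (Real.rpow_le_rpow hm hmR.le hμ) hC0.le
  rcases le_total b a with hba | hab
  · exact le_trans (hC a b d hb hba habd x y u v hx hy hu hv hxu hyv) (hmono a ha haR)
  · have h := hC b a d ha hab (by rwa [abs_sub_comm]) u v x y hu hv hx hy
      (by rwa [norm_sub_rev]) (by rwa [norm_sub_rev])
    rw [norm_sub_rev]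
    exact le_trans h (hmono b hb hbR)

/-- Trace estimate: `|tr(AH + B conj H)| ≤ C R^μ ‖H‖ |ξ−ζ|^{(1/4) min(p−2,1)}`
for symmetric `H`, where `A, B` are built from `ξ, ζ` as in the paper. -/
theorem stmt8 (n : ℕ) (p : ℝ) (hp : 2 < p) :
    ∃ C > (0 : ℝ), ∃ μ > (0 : ℝ), ∀ R > (0 : ℝ),
      ∀ ξ ζ : EuclideanSpace ℂ (Fin n), ‖ξ‖ < R → ‖ζ‖ < R →
        ∀ H : Matrix (Fin n) (Fin n) ℂ, H.transpose = H →
          ‖Matrix.trace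
            ((Matrix.of fun j k => ((‖ξ‖ ^ (p - 4) : ℝ) : ℂ) * ξ j * (starRingEnd ℂ) (ξ k)
                - ((‖ζ‖ ^ (p - 4) : ℝ) : ℂ) * ζ j * (starRingEnd ℂ) (ζ k)) * H
              + (Matrix.of fun j k => ((‖ξ‖ ^ (p - 4) : ℝ) : ℂ) * ξ j * ξ k
                - ((‖ζ‖ ^ (p - 4) : ℝ) : ℂ) * ζ j * ζ k) * H.map (starRingEnd ℂ))‖ ≤
            C * R ^ μ * (⨆ j, ⨆ k, ‖H j k‖) *
              ‖ξ - ζ‖ ^ ((1 / 4) * min (p - 2) 1) := by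

  obtain ⟨C₀, hC₀, hcore⟩ := stmt8_core p hp
  have hα0 : 0 < 1 / 4 * min (p - 2) 1 := by
    have : 0 < min (p - 2) 1 := lt_min (by linarith) one_pos
    positivity
  have hμ0 : 0 < p - 2 - 1 / 4 * min (p - 2) 1 := by
    have h1 : min (p - 2) 1 ≤ p - 2 := min_le_left _ _
    nlinarith [lt_min (show (0:ℝ) < p - 2 by linarith) one_pos]
  refine ⟨2 * (n : ℝ) ^ 2 * C₀ + 1, by positivity,
    p - 2 - 1 / 4 * min (p - 2) 1, hμ0, ?_⟩
  intro R hR ξ ζ hξ hζ H _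
  set α : ℝ := 1 / 4 * min (p - 2) 1 with hα
  set μ : ℝ := p - 2 - α with hμdef
  set d : ℝ := ‖ξ - ζ‖ with hddef
  set S : ℝ := ⨆ j, ⨆ k, ‖H j k‖ with hS
  have hS0 : 0 ≤ S :=
    Real.iSup_nonneg fun j => Real.iSup_nonneg fun k => norm_nonneg _
  have hHle : ∀ j k : Fin n, ‖H j k‖ ≤ S := fun j k =>
    le_ciSup_of_le (Set.Finite.bddAbove (Set.finite_range _)) j
      (le_ciSup (f := fun k' => ‖H j k'‖) (Set.Finite.bddAbove (Set.finite_range _)) k)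
  have hdc : ∀ j : Fin n, ‖ξ j - ζ j‖ ≤ d := fun j => by
    rw [show ξ j - ζ j = (ξ - ζ) j from rfl]
    exact stmt8_coord_le _ j
  have key := hcore R hR ‖ξ‖ ‖ζ‖ d (norm_nonneg _) (norm_nonneg _) hξ hζ
    (abs_norm_sub_norm_le _ _)
  have hterm : 0 ≤ C₀ * R ^ μ * d ^ α := by positivity
  have hA : ∀ j k : Fin n,
      ‖((‖ξ‖ ^ (p - 4) : ℝ) : ℂ) * ξ j * (starRingEnd ℂ) (ξ k)
        - ((‖ζ‖ ^ (p - 4) : ℝ) : ℂ) * ζ j * (starRingEnd ℂ) (ζ k)‖ ≤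
        C₀ * R ^ μ * d ^ α := by
    intro j k
    apply key (ξ j) ((starRingEnd ℂ) (ξ k)) (ζ j) ((starRingEnd ℂ) (ζ k))
      (stmt8_coord_le _ j) _ (stmt8_coord_le _ j) _ (hdc j) _
    · rw [RCLike.norm_conj]; exact stmt8_coord_le _ k
    · rw [RCLike.norm_conj]; exact stmt8_coord_le _ k
    · rw [← map_sub, RCLike.norm_conj]; exact hdc k
  have hB : ∀ j k : Fin n,
      ‖((‖ξ‖ ^ (p - 4) : ℝ) : ℂ) * ξ j * ξ k
        - ((‖ζ‖ ^ (p - 4) : ℝ) : ℂ) * ζ j * ζ k‖ ≤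
        C₀ * R ^ μ * d ^ α := fun j k =>
    key (ξ j) (ξ k) (ζ j) (ζ k) (stmt8_coord_le _ j) (stmt8_coord_le _ k)
      (stmt8_coord_le _ j) (stmt8_coord_le _ k) (hdc j) (hdc k)
  calc ‖Matrix.trace
        ((Matrix.of fun j k => ((‖ξ‖ ^ (p - 4) : ℝ) : ℂ) * ξ j * (starRingEnd ℂ) (ξ k)
            - ((‖ζ‖ ^ (p - 4) : ℝ) : ℂ) * ζ j * (starRingEnd ℂ) (ζ k)) * H
          + (Matrix.of fun j k => ((‖ξ‖ ^ (p - 4) : ℝ) : ℂ) * ξ j * ξ k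
            - ((‖ζ‖ ^ (p - 4) : ℝ) : ℂ) * ζ j * ζ k) * H.map (starRingEnd ℂ))‖
      = ‖∑ j : Fin n, ∑ k : Fin n,
          ((((‖ξ‖ ^ (p - 4) : ℝ) : ℂ) * ξ j * (starRingEnd ℂ) (ξ k)
            - ((‖ζ‖ ^ (p - 4) : ℝ) : ℂ) * ζ j * (starRingEnd ℂ) (ζ k)) * H k j
          + (((‖ξ‖ ^ (p - 4) : ℝ) : ℂ) * ξ j * ξ k
            - ((‖ζ‖ ^ (p - 4) : ℝ) : ℂ) * ζ j * ζ k) * (starRingEnd ℂ) (H k j))‖ := by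
        congr 1
        simp only [Matrix.trace, Matrix.diag, Matrix.add_apply, Matrix.mul_apply,
          Matrix.of_apply, Matrix.map_apply, ← Finset.sum_add_distrib]
    _ ≤ ∑ j : Fin n, ∑ k : Fin n, (C₀ * R ^ μ * d ^ α * S + C₀ * R ^ μ * d ^ α * S) := by
        refine (norm_sum_le _ _).trans (Finset.sum_le_sum fun j _ =>
          (norm_sum_le _ _).trans (Finset.sum_le_sum fun k _ => ?_))
        refine (norm_add_le _ _).trans (add_le_add ?_ ?_)
        · rw [norm_mul]
          refine mul_le_mul (hA j k) ?_ (norm_nonneg _) hterm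
          exact hHle k j
        · rw [norm_mul]
          refine mul_le_mul (hB j k) ?_ (norm_nonneg _) hterm
          rw [RCLike.norm_conj]; exact hHle k j
    _ = (n : ℝ) ^ 2 * (2 * (C₀ * R ^ μ * d ^ α * S)) := by
        simp [Finset.sum_const, Finset.card_univ]
        ring
    _ ≤ (2 * (n : ℝ) ^ 2 * C₀ + 1) * R ^ μ * S * d ^ α := by
        have h1 : (n : ℝ) ^ 2 * (2 * (C₀ * R ^ μ * d ^ α * S)) =
            (2 * (n : ℝ) ^ 2 * C₀) * (R ^ μ * S * d ^ α) := by ring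
        have h2 : 0 ≤ R ^ μ * S * d ^ α := by positivity
        rw [h1, show (2 * (n : ℝ) ^ 2 * C₀ + 1) * R ^ μ * S * d ^ α =
          (2 * (n : ℝ) ^ 2 * C₀ + 1) * (R ^ μ * S * d ^ α) by ring]
        apply mul_le_mul_of_nonneg_right _ h2
        linarith
end

section
/- Let n ≥ 2, p > 2, ξ, ζ ∈ ℂⁿ with |ξ|, |ζ| ≤ R. Define à = A − (2/n) tr(A) I and B̃ = B − (2/n) tr(B) I, where A_{jk} = |ξ|^{p−4} ξⱼ conj(ξₖ) − |ζ|^{p−4} ζⱼ conj(ζₖ) and B_{jk} = |ξ|^{p−4} ξⱼ ξₖ − |ζ|^{p−4} ζⱼ ζₖ. Then tr(à Ã*) = (|ξ|^{p−2} − |ζ|^{p−2})² + |ξ|^{p−4} |ζ|^{p−4} ( 2|ξ|²|ζ|² − 2|ξ · conj(ζ)|² ). -/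
open scoped BigOperators


lemma stmt9_aux {n : ℕ} (hn : (n : ℂ) ≠ 0) (M : Matrix (Fin n) (Fin n) ℂ) (t : ℝ)
    (htr : M.trace = (t : ℂ)) :
    ((M - (((2 : ℂ) / n) * M.trace) • 1) *
        (M - (((2 : ℂ) / n) * M.trace) • 1).conjTranspose).trace
      = (M * M.conjTranspose).trace := by
  have hconj : M.conjTranspose.trace = (t : ℂ) := by
    simp [Matrix.trace_conjTranspose, htr, Complex.star_def, Complex.conj_ofReal]
  rw [htr]
  simp only [Matrix.conjTranspose_sub, Matrix.conjTranspose_smul, Matrix.conjTranspose_one,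
    Matrix.sub_mul, Matrix.mul_sub, Matrix.smul_mul, Matrix.mul_smul, Matrix.one_mul,
    Matrix.mul_one, Matrix.trace_sub, Matrix.trace_smul, Matrix.trace_one, smul_eq_mul,
    smul_smul, htr, hconj, Complex.star_def, map_mul, map_div₀, map_ofNat, map_natCast, Complex.conj_ofReal,
    Fintype.card_fin]
  field_simp
  ring

/-- Formula for `tr(Ã Ã*)`, where `Ã = A − (2/n) tr(A) I`. -/
theorem stmt9 (n : ℕ) (hn : 2 ≤ n) (p R : ℝ) (hp : 2 < p)
    (ξ ζ : EuclideanSpace ℂ (Fin n)) (hξ : ‖ξ‖ ≤ R) (hζ : ‖ζ‖ ≤ R) :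
    let A : Matrix (Fin n) (Fin n) ℂ :=
      Matrix.of fun j k => ((‖ξ‖ ^ (p - 4) : ℝ) : ℂ) * ξ j * (starRingEnd ℂ) (ξ k)
        - ((‖ζ‖ ^ (p - 4) : ℝ) : ℂ) * ζ j * (starRingEnd ℂ) (ζ k)
    let At : Matrix (Fin n) (Fin n) ℂ := A - (((2 : ℂ) / n) * Matrix.trace A) • 1
    Matrix.trace (At * At.conjTranspose) =
      (((‖ξ‖ ^ (p - 2) - ‖ζ‖ ^ (p - 2)) ^ 2 +
        ‖ξ‖ ^ (p - 4) * ‖ζ‖ ^ (p - 4) *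
          (2 * ‖ξ‖ ^ 2 * ‖ζ‖ ^ 2 -
            2 * ‖∑ j, ξ j * (starRingEnd ℂ) (ζ j)‖ ^ 2) : ℝ) : ℂ) := by
  intro A At
  have hnC : (n : ℂ) ≠ 0 := Nat.cast_ne_zero.mpr (by omega)
  set a : ℝ := ‖ξ‖ ^ (p - 4) with ha
  set b : ℝ := ‖ζ‖ ^ (p - 4) with hb
  set w : ℂ := ∑ j, ξ j * (starRingEnd ℂ) (ζ j) with hw
  -- norm sums
  have hnorm : ∀ x : EuclideanSpace ℂ (Fin n),
      ∑ j, x j * (starRingEnd ℂ) (x j) = ((‖x‖ ^ 2 : ℝ) : ℂ) := by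
    intro x
    have h1 : ‖x‖ ^ 2 = ∑ j, ‖x j‖ ^ 2 := by
      rw [EuclideanSpace.norm_eq, Real.sq_sqrt]
      positivity
    rw [h1]
    push_cast
    refine Finset.sum_congr rfl fun j _ => ?_
    rw [Complex.mul_conj, Complex.normSq_eq_norm_sq]
    push_cast
    ring
  have hS := hnorm ξ
  have hT := hnorm ζ
  -- trace of A
  have htr : Matrix.trace A = ((a * ‖ξ‖ ^ 2 - b * ‖ζ‖ ^ 2 : ℝ) : ℂ) := by
    have : Matrix.trace A
        = (a : ℂ) * ∑ j, ξ j * (starRingEnd ℂ) (ξ j)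
          - (b : ℂ) * ∑ j, ζ j * (starRingEnd ℂ) (ζ j) := by
      simp only [Matrix.trace, Matrix.diag, A, Matrix.of_apply,
        Finset.sum_sub_distrib, Finset.mul_sum, ha, hb]
      ring_nf
    rw [this, hS, hT]
    push_cast
    try ring
  -- trace of A Aᴴ
  have hAA : Matrix.trace (A * A.conjTranspose)
      = ∑ j, ∑ k, A j k * (starRingEnd ℂ) (A j k) := by
    simp [Matrix.trace, Matrix.mul_apply, Matrix.conjTranspose_apply, Matrix.diag]
  have expand : ∀ j k, A j k * (starRingEnd ℂ) (A j k)
      = (a : ℂ) ^ 2 * ((ξ j * (starRingEnd ℂ) (ξ j)) * (ξ k * (starRingEnd ℂ) (ξ k)))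
        + (b : ℂ) ^ 2 * ((ζ j * (starRingEnd ℂ) (ζ j)) * (ζ k * (starRingEnd ℂ) (ζ k)))
        - (a : ℂ) * b * ((ξ j * (starRingEnd ℂ) (ζ j)) * (starRingEnd ℂ) (ξ k * (starRingEnd ℂ) (ζ k))
            + (starRingEnd ℂ) (ξ j * (starRingEnd ℂ) (ζ j)) * (ξ k * (starRingEnd ℂ) (ζ k))) := by
    intro j k
    simp only [A, Matrix.of_apply, map_sub, map_mul, Complex.conj_conj, Complex.conj_ofReal]
    ring
  have hAA2 : Matrix.trace (A * A.conjTranspose)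
      = (a : ℂ) ^ 2 * (((‖ξ‖ ^ 2 : ℝ) : ℂ) * ((‖ξ‖ ^ 2 : ℝ) : ℂ))
        + (b : ℂ) ^ 2 * (((‖ζ‖ ^ 2 : ℝ) : ℂ) * ((‖ζ‖ ^ 2 : ℝ) : ℂ))
        - (a : ℂ) * b * (w * (starRingEnd ℂ) w + (starRingEnd ℂ) w * w) := by
    rw [hAA]
    rw [Finset.sum_congr rfl fun j _ => Finset.sum_congr rfl fun k _ => expand j k]
    simp only [Finset.sum_add_distrib, Finset.sum_sub_distrib, ← Finset.mul_sum,
      ← Finset.sum_mul, hS, hT, ← map_sum, ← hw]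
    try ring
  -- trace of At Atᴴ equals trace of A Aᴴ
  have key : Matrix.trace (At * At.conjTranspose) = Matrix.trace (A * A.conjTranspose) :=
    stmt9_aux hnC A (a * ‖ξ‖ ^ 2 - b * ‖ζ‖ ^ 2) htr
  rw [key, hAA2]
  -- final real computation
  have hww : w * (starRingEnd ℂ) w = ((‖w‖ ^ 2 : ℝ) : ℂ) := by
    rw [Complex.mul_conj, Complex.sq_norm]
  have hwc : (starRingEnd ℂ) w * w = ((‖w‖ ^ 2 : ℝ) : ℂ) := by
    rw [mul_comm]; exact hww
  rw [hww, hwc]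
  have hx2 : ‖ξ‖ ^ (p - 2) = a * ‖ξ‖ ^ 2 := by
    rcases eq_or_lt_of_le (norm_nonneg ξ) with h | h
    · rw [← h, Real.zero_rpow (by linarith)]
      ring
    · rw [ha, ← Real.rpow_natCast ‖ξ‖ 2, ← Real.rpow_add h]
      ring_nf
  have hz2 : ‖ζ‖ ^ (p - 2) = b * ‖ζ‖ ^ 2 := by
    rcases eq_or_lt_of_le (norm_nonneg ζ) with h | h
    · rw [← h, Real.zero_rpow (by linarith)]
      ring
    · rw [hb, ← Real.rpow_natCast ‖ζ‖ 2, ← Real.rpow_add h]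
      ring_nf
  rw [hx2, hz2]
  push_cast
  ring
end

section
/- Let n ≥ 2, p > 2, ξ, ζ ∈ ℂⁿ, and with B_{jk} = |ξ|^{p−4} ξⱼ ξₖ − |ζ|^{p−4} ζⱼ ζₖ and B̃ = B − (2/n) tr(B) I, one has tr(B̃ B̃*) = (|ξ|^{p−2} − |ζ|^{p−2})² + |ξ|^{p−4} |ζ|^{p−4} ( 2|ξ|²|ζ|² − (ξ·conj(ζ))² − (conj(ξ)·ζ)² ). -/
open scoped BigOperators

private lemma stmt10_mc (z : ℂ) : z * star z = ((‖z‖:ℝ):ℂ)^2 := by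
  rw [show star z = (starRingEnd ℂ) z from rfl, Complex.mul_conj, Complex.normSq_eq_norm_sq]
  push_cast
  rfl

private lemma stmt10_normsq (n : ℕ) (ξ : EuclideanSpace ℂ (Fin n)) :
    ((‖ξ‖:ℝ):ℂ)^2 = ∑ j, ξ j * star (ξ j) := by
  have h : (‖ξ‖:ℝ)^2 = ∑ j, ‖ξ j‖^2 := by
    rw [EuclideanSpace.norm_eq, Real.sq_sqrt (by positivity)]
  calc ((‖ξ‖:ℝ):ℂ)^2 = (((‖ξ‖^2 : ℝ)):ℂ) := by push_cast; ring
    _ = ∑ j, ξ j * star (ξ j) := by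
        rw [h]; push_cast
        exact Finset.sum_congr rfl fun j _ => (stmt10_mc (ξ j)).symm

private lemma stmt10_rpowsplit (p : ℝ) (hp : 2 < p) (x : ℝ) (hx : 0 ≤ x) :
    x ^ (p - 2) = x ^ (p - 4) * x ^ 2 := by
  rcases eq_or_lt_of_le hx with h | h
  · rw [← h, Real.zero_rpow (by linarith)]
    ring
  · rw [show x ^ 2 = x ^ ((2:ℕ):ℝ) from (Real.rpow_natCast x 2).symm,
      ← Real.rpow_add h]
    ring_nf

private lemma stmt10_sqsum (n : ℕ) (f : Fin n → ℂ) :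
    (∑ j, f j)^2 = ∑ j, ∑ k, f j * f k := by
  rw [sq, Finset.sum_mul_sum]

private lemma stmt10_tracered (n : ℕ) (hn : 2 ≤ n) (M : Matrix (Fin n) (Fin n) ℂ) :
    Matrix.trace ((M - (((2:ℂ)/n) * Matrix.trace M) • 1) *
      (M - (((2:ℂ)/n) * Matrix.trace M) • 1).conjTranspose)
    = Matrix.trace (M * M.conjTranspose) := by
  have hn0 : (n:ℂ) ≠ 0 := Nat.cast_ne_zero.mpr (by omega)
  have hs : star (((2:ℂ)/n) * Matrix.trace M) = ((2:ℂ)/n) * star (Matrix.trace M) := by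
    simp [star_div₀, star_mul', mul_comm]
  simp only [Matrix.conjTranspose_sub, Matrix.conjTranspose_smul, Matrix.conjTranspose_one,
    Matrix.sub_mul, Matrix.mul_sub, Matrix.smul_mul, Matrix.mul_smul, Matrix.mul_one,
    Matrix.one_mul, Matrix.trace_sub, Matrix.trace_smul, smul_smul, smul_eq_mul,
    Matrix.trace_conjTranspose, Matrix.trace_one, Fintype.card_fin, hs]
  field_simp
  ring

/-- Formula for `tr(B̃ B̃*)`, where `B̃ = B − (2/n) tr(B) I`. -/
theorem stmt10 (n : ℕ) (hn : 2 ≤ n) (p : ℝ) (hp : 2 < p)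
    (ξ ζ : EuclideanSpace ℂ (Fin n)) :
    let B : Matrix (Fin n) (Fin n) ℂ :=
      Matrix.of fun j k => ((‖ξ‖ ^ (p - 4) : ℝ) : ℂ) * ξ j * ξ k
        - ((‖ζ‖ ^ (p - 4) : ℝ) : ℂ) * ζ j * ζ k
    let Bt : Matrix (Fin n) (Fin n) ℂ := B - (((2 : ℂ) / n) * Matrix.trace B) • 1
    Matrix.trace (Bt * Bt.conjTranspose) =
      (((‖ξ‖ ^ (p - 2) - ‖ζ‖ ^ (p - 2)) ^ 2 : ℝ) : ℂ) +
        ((‖ξ‖ ^ (p - 4) * ‖ζ‖ ^ (p - 4) : ℝ) : ℂ) *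
          (((2 * ‖ξ‖ ^ 2 * ‖ζ‖ ^ 2 : ℝ) : ℂ)
            - (∑ j, ξ j * (starRingEnd ℂ) (ζ j)) ^ 2
            - (∑ j, (starRingEnd ℂ) (ξ j) * ζ j) ^ 2) := by
  intro B Bt
  have hred : Matrix.trace (Bt * Bt.conjTranspose) = Matrix.trace (B * B.conjTranspose) :=
    stmt10_tracered n hn B
  set A : ℝ := ‖ξ‖ ^ (p - 4) with hA
  set C : ℝ := ‖ζ‖ ^ (p - 4) with hC
  -- trace as a double sum
  have htr : Matrix.trace (B * B.conjTranspose)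
      = ∑ j, ∑ k, B j k * star (B j k) := by
    simp [Matrix.trace, Matrix.mul_apply, Matrix.conjTranspose_apply, Matrix.diag]
  -- expand each term
  have hterm : ∀ j k, B j k * star (B j k) =
      (A:ℂ)^2 * ((ξ j * star (ξ j)) * (ξ k * star (ξ k)))
      + (C:ℂ)^2 * ((ζ j * star (ζ j)) * (ζ k * star (ζ k)))
      - (A:ℂ)*(C:ℂ) * ((ξ j * star (ζ j)) * (ξ k * star (ζ k)))
      - (A:ℂ)*(C:ℂ) * ((star (ξ j) * ζ j) * (star (ξ k) * ζ k)) := by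
    intro j k
    show (((A:ℝ):ℂ) * ξ j * ξ k - ((C:ℝ):ℂ) * ζ j * ζ k)
        * star (((A:ℝ):ℂ) * ξ j * ξ k - ((C:ℝ):ℂ) * ζ j * ζ k) = _
    rw [star_sub, star_mul, star_mul, star_mul, star_mul]
    rw [show star ((A:ℝ):ℂ) = ((A:ℝ):ℂ) from Complex.conj_ofReal A,
      show star ((C:ℝ):ℂ) = ((C:ℝ):ℂ) from Complex.conj_ofReal C]
    ring
  have hsum : (∑ j, ∑ k, B j k * star (B j k))
      = (A:ℂ)^2 * (∑ j, ξ j * star (ξ j))^2 + (C:ℂ)^2 * (∑ j, ζ j * star (ζ j))^2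
      - (A:ℂ)*(C:ℂ) * (∑ j, ξ j * star (ζ j))^2
      - (A:ℂ)*(C:ℂ) * (∑ j, star (ξ j) * ζ j)^2 := by
    rw [stmt10_sqsum, stmt10_sqsum, stmt10_sqsum, stmt10_sqsum]
    simp only [Finset.mul_sum]
    rw [← Finset.sum_add_distrib, ← Finset.sum_sub_distrib, ← Finset.sum_sub_distrib]
    refine Finset.sum_congr rfl fun j _ => ?_
    rw [← Finset.sum_add_distrib, ← Finset.sum_sub_distrib, ← Finset.sum_sub_distrib]
    exact Finset.sum_congr rfl fun k _ => hterm j k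
  -- scalar identities
  have hXi : ((‖ξ‖:ℝ):ℂ)^2 = ∑ j, ξ j * star (ξ j) := stmt10_normsq n ξ
  have hZe : ((‖ζ‖:ℝ):ℂ)^2 = ∑ j, ζ j * star (ζ j) := stmt10_normsq n ζ
  have hpx : ‖ξ‖ ^ (p - 2) = A * ‖ξ‖ ^ 2 := stmt10_rpowsplit p hp ‖ξ‖ (norm_nonneg ξ)
  have hpz : ‖ζ‖ ^ (p - 2) = C * ‖ζ‖ ^ 2 := stmt10_rpowsplit p hp ‖ζ‖ (norm_nonneg ζ)
  rw [hred, htr, hsum, hpx, hpz]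
  simp only [starRingEnd_apply]
  push_cast
  rw [← hXi, ← hZe]
  ring
end

section
/- For all ξ, ζ ∈ ℂⁿ, one has | 4|ξ|²|ζ|² − (ξ·conj(ζ) + conj(ξ)·ζ)² | ≤ 2^{5−(p−2)/2} |ξ| |ζ| min(|ξ|, |ζ|) max(|ξ|, |ζ|)^{(4−p)/2} |ξ − ζ|^{(p−2)/2}, for any fixed p ∈ (2, 3). -/
open scoped BigOperators

set_option maxHeartbeats 1000000 in
lemma aux11 (p a b c r : ℝ) (hp2 : 2 < p) (hp3 : p < 3)
    (ha : 0 ≤ a) (hb : 0 ≤ b) (hc : 0 ≤ c) (hr : |r| ≤ a * b)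
    (hcsq : c ^ 2 = a ^ 2 + b ^ 2 - 2 * r) :
    |4 * a ^ 2 * b ^ 2 - (2 * r) ^ 2| ≤
      2 ^ (5 - (p - 2) / 2) * a * b * min a b *
        max a b ^ ((4 - p) / 2) * c ^ ((p - 2) / 2) := by
  set θ := (p - 2) / 2 with hθ
  have hθ0 : 0 < θ := by rw [hθ]; linarith
  have hθ1 : θ < 1 := by rw [hθ]; linarith
  have h1θ : (4 - p) / 2 = 1 - θ := by rw [hθ]; ring
  set m := min a b with hm
  set M := max a b with hM
  have hm0 : 0 ≤ m := le_min ha hb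
  have hM0 : 0 ≤ M := le_max_of_le_left ha
  have hmM : m * M = a * b := min_mul_max a b
  have hrle : r ≤ a * b := (abs_le.mp hr).2
  have hrge : -(a*b) ≤ r := (abs_le.mp hr).1
  have hcθ : 0 ≤ c ^ θ := Real.rpow_nonneg hc _
  have hMθ : 0 ≤ M ^ (1 - θ) := Real.rpow_nonneg hM0 _
  have h2p : (0:ℝ) ≤ 2 ^ (5 - θ) := (Real.rpow_pos_of_pos two_pos _).le
  have hrhs0 : 0 ≤ 2 ^ (5 - θ) * a * b * m * M ^ (1 - θ) * c ^ θ := by positivity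
  rw [h1θ]
  set d := |a - b| with hd
  have hd0 : 0 ≤ d := abs_nonneg _
  have hdsq : d ^ 2 = (a - b) ^ 2 := sq_abs _
  set X := 2 * a * b - 2 * r with hX
  have hX0 : 0 ≤ X := by rw [hX]; linarith
  have hXfac : X = (c - d) * (c + d) := by linear_combination hdsq - hcsq
  have hab0 : 0 ≤ 2 * a * b + 2 * r := by linarith
  have habs : |4 * a ^ 2 * b ^ 2 - (2 * r) ^ 2| = X * (2 * a * b + 2 * r) := by
    rw [abs_of_nonneg]
    · ring
    · nlinarith [mul_nonneg hX0 hab0]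
  rcases eq_or_lt_of_le hX0 with hXz | hXp
  · rw [habs, ← hXz]; simpa using hrhs0
  have hdc : d ≤ c := by
    have h1 : d ^ 2 ≤ c ^ 2 := by nlinarith [hdsq, hcsq]
    exact (pow_le_pow_iff_left₀ hd0 hc two_ne_zero).mp h1
  have hcab : c ≤ a + b := by
    have h1 : c ^ 2 ≤ (a + b) ^ 2 := by nlinarith [hcsq]
    exact (pow_le_pow_iff_left₀ hc (by linarith) two_ne_zero).mp h1
  have habd : a + b - d = 2 * m := by
    rcases le_total a b with h | h
    · have h1 : d = -(a - b) := by rw [hd]; exact abs_of_nonpos (by linarith)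
      have h2 : m = a := min_eq_left h
      linarith
    · have h1 : d = a - b := by rw [hd]; exact abs_of_nonneg (by linarith)
      have h2 : m = b := min_eq_right h
      linarith
  have hXB : X ≤ 4 * m * c := by
    have h1 : c - d ≤ 2 * m := by linarith
    have h2 : c + d ≤ 2 * c := by linarith
    have h3 : (c - d) * (c + d) ≤ (2 * m) * (2 * c) :=
      mul_le_mul h1 h2 (by linarith) (by linarith)
    rw [hXfac]; linarith
  have hXA : X ≤ 4 * m * M := by rw [hX]; linarith [hmM]
  have h4m0 : (0:ℝ) ≤ 4 * m := by linarith
  have hXkey : X ≤ 4 * m * c ^ θ * M ^ (1 - θ) := by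
    have e1 : X = X ^ θ * X ^ (1 - θ) := by
      rw [← Real.rpow_add hXp]; simp
    have e2 : X ^ θ ≤ (4 * m * c) ^ θ := Real.rpow_le_rpow hX0 hXB hθ0.le
    have e3 : X ^ (1 - θ) ≤ (4 * m * M) ^ (1 - θ) :=
      Real.rpow_le_rpow hX0 hXA (by linarith)
    have e4 : (4 * m * c) ^ θ * (4 * m * M) ^ (1 - θ) = 4 * m * c ^ θ * M ^ (1 - θ) := by
      rw [Real.mul_rpow h4m0 hc, Real.mul_rpow h4m0 hM0,
        show (4*m) ^ θ * c ^ θ * ((4*m) ^ (1-θ) * M ^ (1-θ))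
          = ((4*m) ^ θ * (4*m) ^ (1-θ)) * (c ^ θ * M ^ (1-θ)) by ring,
        ← Real.rpow_add' h4m0 (by norm_num)]
      simp; ring
    calc X = X ^ θ * X ^ (1 - θ) := e1
      _ ≤ (4 * m * c) ^ θ * (4 * m * M) ^ (1 - θ) :=
          mul_le_mul e2 e3 (Real.rpow_nonneg hX0 _) (Real.rpow_nonneg (by positivity) _)
      _ = 4 * m * c ^ θ * M ^ (1 - θ) := e4
  have h16 : (16:ℝ) ≤ 2 ^ (5 - θ) := by
    have h := Real.rpow_le_rpow_of_exponent_le (one_le_two) (by linarith : (4:ℝ) ≤ 5 - θ)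
    rw [show ((2:ℝ)) ^ (4:ℝ) = 16 by
      rw [show (4:ℝ) = ((4:ℕ):ℝ) by norm_num, Real.rpow_natCast]; norm_num] at h
    exact h
  rw [habs]
  have step1 : X * (2 * a * b + 2 * r) ≤ X * (4 * a * b) :=
    mul_le_mul_of_nonneg_left (by linarith) hX0
  have step2 : X * (4 * a * b) ≤ (4 * m * c ^ θ * M ^ (1 - θ)) * (4 * a * b) :=
    mul_le_mul_of_nonneg_right hXkey (by positivity)
  have step3 : (4 * m * c ^ θ * M ^ (1 - θ)) * (4 * a * b)
      ≤ 2 ^ (5 - θ) * a * b * m * M ^ (1 - θ) * c ^ θ := by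
    have e : (4 * m * c ^ θ * M ^ (1 - θ)) * (4 * a * b)
        = 16 * (a * b * m * (M ^ (1 - θ) * c ^ θ)) := by ring
    rw [e, show 2 ^ (5 - θ) * a * b * m * M ^ (1 - θ) * c ^ θ
        = 2 ^ (5 - θ) * (a * b * m * (M ^ (1 - θ) * c ^ θ)) by ring]
    exact mul_le_mul_of_nonneg_right h16 (by positivity)
  linarith

/-- `| 4|ξ|²|ζ|² − (ξ·conj ζ + conj ξ·ζ)² | ≤ 2^{5−(p−2)/2} |ξ||ζ| min max^{(4−p)/2} |ξ−ζ|^{(p−2)/2}`. -/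
theorem stmt11 (n : ℕ) (p : ℝ) (hp2 : 2 < p) (hp3 : p < 3)
    (ξ ζ : EuclideanSpace ℂ (Fin n)) :
    ‖(((4 * ‖ξ‖ ^ 2 * ‖ζ‖ ^ 2 : ℝ) : ℂ) -
        ((∑ j, ξ j * (starRingEnd ℂ) (ζ j)) + ∑ j, (starRingEnd ℂ) (ξ j) * ζ j) ^ 2)‖ ≤
      2 ^ (5 - (p - 2) / 2) * ‖ξ‖ * ‖ζ‖ * min ‖ξ‖ ‖ζ‖ *
        max ‖ξ‖ ‖ζ‖ ^ ((4 - p) / 2) * ‖ξ - ζ‖ ^ ((p - 2) / 2) := by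
  set z : ℂ := inner ℂ ξ ζ with hz
  have hz2 : (∑ j, (starRingEnd ℂ) (ξ j) * ζ j) = z := by
    rw [hz]
    simp [PiLp.inner_apply, RCLike.inner_apply, mul_comm]
  have hz1 : (∑ j, ξ j * (starRingEnd ℂ) (ζ j)) = (starRingEnd ℂ) z := by
    rw [hz]
    simp [PiLp.inner_apply, RCLike.inner_apply, map_sum, mul_comm]
  set r : ℝ := z.re with hr
  have hsum : ((∑ j, ξ j * (starRingEnd ℂ) (ζ j)) + ∑ j, (starRingEnd ℂ) (ξ j) * ζ j)
      = ((2 * r : ℝ) : ℂ) := by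
    rw [hz1, hz2, add_comm, Complex.add_conj, hr]
  have hkey : ‖(((4 * ‖ξ‖ ^ 2 * ‖ζ‖ ^ 2 : ℝ) : ℂ) -
      ((∑ j, ξ j * (starRingEnd ℂ) (ζ j)) + ∑ j, (starRingEnd ℂ) (ξ j) * ζ j) ^ 2)‖
      = |4 * ‖ξ‖ ^ 2 * ‖ζ‖ ^ 2 - (2 * r) ^ 2| := by
    rw [hsum, show (((4 * ‖ξ‖ ^ 2 * ‖ζ‖ ^ 2 : ℝ) : ℂ) - ((2 * r : ℝ) : ℂ) ^ 2)
        = (((4 * ‖ξ‖ ^ 2 * ‖ζ‖ ^ 2 - (2 * r) ^ 2 : ℝ)) : ℂ) by push_cast; ring,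
      Complex.norm_real, Real.norm_eq_abs]
  rw [hkey]
  apply aux11 p _ _ _ _ hp2 hp3 (norm_nonneg _) (norm_nonneg _) (norm_nonneg _)
  · rw [hr]
    calc |z.re| ≤ ‖z‖ := Complex.abs_re_le_norm z
      _ = ‖z‖ := rfl
      _ ≤ ‖ξ‖ * ‖ζ‖ := norm_inner_le_norm (𝕜 := ℂ) ξ ζ
  · have := @norm_sub_sq ℂ _ _ _ _ ξ ζ
    rw [hr, hz]
    rw [this]
    simp [hz]
    ring
end
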